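/- arXiv:1902.08177 — 6 statements merged into one kernel-verified Lean document; each statement's English description precedes it below -/
import Mathlib

section
/- Let s and n be natural numbers with 1 ≤ s ≤ n−1 and let κ be an infinite cardinal (viewed as an ordinal). Then the Specker graph G(κ, t^n_s) has κ many vertices and its chromatic number is exactly κ. -/
open Cardinal

/-- `a` and `b` (each of size `n`) realize the disjoint type `t : 2n → 2`: listing `a ∪ b` in
increasing order as `α₀ < … < α_{2n-1}`, `a = {αᵢ : t i = 0}` and `b = {αᵢ : t i = 1}`. -/
def HasType (n : ℕ) (a b : Finset Ordinal) (t : Fin (2 * n) → Fin 2) : Prop :=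
  a.card = n ∧ b.card = n ∧
    ∃ h : (a ∪ b).card = 2 * n,
      ∀ i : Fin (2 * n), (((a ∪ b).orderIsoOfFin h i : Ordinal) ∈ a ↔ t i = 0)

/-- The disjoint type `t^n_s`: `s` zeros, then `n - s` copies of the block `01`,
then `s` ones. -/
def specialType (n s : ℕ) : Fin (2 * n) → Fin 2 := fun i =>
  if (i : ℕ) < s then 0
  else if 2 * n - s ≤ (i : ℕ) then 1
  else if ((i : ℕ) - s) % 2 = 0 then 0 else 1

/-- The vertex set of the Specker graph `G(α, t)`: `n`-element sets of ordinals `< α`. -/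
def SpeckerVerts (α : Ordinal) (n : ℕ) : Type _ :=
  {x : Finset Ordinal // x.card = n ∧ ∀ β ∈ x, β < α}

/-- The Specker graph `G(α, t)`: vertices are `n`-element subsets of `α`; distinct `a, b`
are adjacent iff they are disjoint and `tp(a,b) = t` or `tp(b,a) = t`. -/
def SpeckerGraph (α : Ordinal) (n : ℕ) (t : Fin (2 * n) → Fin 2) :
    SimpleGraph (SpeckerVerts α n) where
  Adj a b := a ≠ b ∧ Disjoint a.1 b.1 ∧ (HasType n a.1 b.1 t ∨ HasType n b.1 a.1 t)
  symm := ⟨fun a b ⟨hne, hd, ht⟩ => ⟨hne.symm, hd.symm, ht.symm⟩⟩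
  loopless := ⟨fun a h => h.1 rfl⟩


section Aux
set_option linter.unnecessarySeqFocus false

variable {β : Type}

def Dset (c : Finset Ordinal → β) (L : Ordinal) : ℕ → List Ordinal → Set β
  | 0, p => {c p.toFinset}
  | (r+1), p => {γ | ∀ b < L, ∃ x, b < x ∧ x < L ∧ (∀ y ∈ p, y < x) ∧ γ ∈ Dset c L r (x :: p)}

theorem Dset_nonempty {c : Finset Ordinal → β} {lam : Cardinal} (hreg : lam.IsRegular)
    (hβ : #β < lam) : ∀ (r : ℕ) (p : List Ordinal), (∀ y ∈ p, y < lam.ord) →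
    (Dset c lam.ord r p).Nonempty := by
  have hlim : Order.IsSuccLimit lam.ord := Cardinal.isSuccLimit_ord hreg.aleph0_le
  intro r
  induction r with
  | zero => intro p _; exact ⟨_, rfl⟩
  | succ r ih =>
    intro p hp
    by_contra hempty
    rw [Set.not_nonempty_iff_eq_empty, Set.eq_empty_iff_forall_notMem] at hempty
    have hb : ∀ γ : β, ∃ b, b < lam.ord ∧ ∀ x, b < x → x < lam.ord →
        (∀ y ∈ p, y < x) → γ ∉ Dset c lam.ord r (x :: p) := by
      intro γ
      have h := hempty γ
      simp only [Dset, Set.mem_setOf_eq, not_forall] at h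
      obtain ⟨b, hnb⟩ := h
      push_neg at hnb
      exact ⟨b, hnb.1, hnb.2⟩
    choose g hgL hg using hb
    have hβne : Nonempty β := ⟨c ∅⟩
    have hb0 : (⨆ γ : β, g γ) < lam.ord :=
      Cardinal.iSup_lt_ord_of_isRegular hreg hβ hgL
    have hm : p.toFinset.sup id < lam.ord := by
      rw [Finset.sup_lt_iff (hlim.pos)]
      intro y hy
      exact hp y (List.mem_toFinset.mp hy)
    set x : Ordinal := ((⨆ γ : β, g γ) ⊔ p.toFinset.sup id) + 1 with hxdef
    have hxL : x < lam.ord := hlim.succ_lt (max_lt hb0 hm)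
    have hxp : ∀ y ∈ p, y < x := by
      intro y hy
      calc y ≤ p.toFinset.sup id := Finset.le_sup (f := id) (List.mem_toFinset.mpr hy)
      _ ≤ _ := le_max_right _ _
      _ < x := lt_add_one _
    obtain ⟨γ, hγ⟩ := ih (x :: p) (by
      intro y hy
      rcases List.mem_cons.mp hy with h | h
      · exact h ▸ hxL
      · exact hp y h)
    refine hg γ x ?_ hxL hxp hγ
    calc g γ ≤ ⨆ γ : β, g γ := Ordinal.le_iSup _ _
    _ ≤ _ := le_max_left _ _
    _ < x := lt_add_one _

def alist (t' : ℕ → Fin 2) (v : Fin 2) (e : ℕ → Ordinal) (i : ℕ) : List Ordinal :=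
  (((List.range i).filter fun j => t' j = v).map e).reverse

def zcount (t' : ℕ → Fin 2) (v : Fin 2) (i : ℕ) : ℕ :=
  ((List.range i).filter fun j => t' j = v).length

lemma alist_length (t' v e i) : (alist t' v e i).length = zcount t' v i := by
  simp [alist, zcount]

lemma zcount_succ (t' v i) :
    zcount t' v (i+1) = zcount t' v i + if t' i = v then 1 else 0 := by
  simp [zcount, List.range_succ, List.filter_append]
  split_ifs with h <;> simp [h]

lemma zcount_mono (t' v) : Monotone (zcount t' v) := by
  apply monotone_nat_of_le_succ
  intro i
  rw [zcount_succ]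
  omega

lemma alist_succ_pos (t' v e i) (h : t' i = v) :
    alist t' v e (i+1) = e i :: alist t' v e i := by
  simp [alist, List.range_succ, List.filter_append, h]

lemma alist_succ_neg (t' v e i) (h : t' i ≠ v) :
    alist t' v e (i+1) = alist t' v e i := by
  simp [alist, List.range_succ, List.filter_append, h]

lemma alist_congr {t' v e e' i} (h : ∀ j < i, e j = e' j) :
    alist t' v e i = alist t' v e' i := by
  unfold alist
  congr 1
  apply List.map_congr_left
  intro j hj
  exact h j (List.mem_range.mp (List.mem_of_mem_filter hj))

lemma mem_alist {t' v e i y} : y ∈ alist t' v e i ↔ ∃ j < i, t' j = v ∧ e j = y := by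
  simp [alist, List.mem_filter]
  constructor
  · rintro ⟨j, ⟨hj, hv⟩, he⟩; exact ⟨j, hj, by simpa using hv, he⟩
  · rintro ⟨j, hj, hv, he⟩; exact ⟨j, ⟨hj, by simpa using hv⟩, he⟩

lemma alist_toFinset (t' v e i) :
    (alist t' v e i).toFinset = ((Finset.range i).filter fun j => t' j = v).image e := by
  ext y
  simp only [List.mem_toFinset, mem_alist, Finset.mem_image, Finset.mem_filter,
    Finset.mem_range]
  tauto

lemma fin2_cases (x : Fin 2) : x = 0 ∨ x = 1 := by omega

lemma zcount_lt {t' : ℕ → Fin 2} {v : Fin 2} {i n : ℕ} (hin : i < 2*n)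
    (hv : t' i = v) (htot : zcount t' v (2*n) = n) : zcount t' v i < n := by
  have h1 := zcount_succ t' v i
  have h2 := zcount_mono t' v (show i+1 ≤ 2*n by omega)
  rw [htot] at h2
  rw [hv, if_pos rfl] at h1
  omega

/-- one construction step, extending side `v`. -/
lemma step_lemma {β : Type} {c : Finset Ordinal → β} {lam : Cardinal} {γ : β}
    (hlim : Order.IsSuccLimit lam.ord) {t' : ℕ → Fin 2} {n i : ℕ} {v w : Fin 2} (hvw : v ≠ w)
    (e : ℕ → Ordinal) (heL : ∀ j < i, e j < lam.ord)
    (hemono : ∀ j k, j < k → k < i → e j < e k)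
    (hQv : γ ∈ Dset c lam.ord (n - zcount t' v i) (alist t' v e i))
    (hQw : γ ∈ Dset c lam.ord (n - zcount t' w i) (alist t' w e i))
    (hv : t' i = v) (hcnt : zcount t' v i < n) :
    ∃ e' : ℕ → Ordinal, (∀ j < i+1, e' j < lam.ord) ∧
      (∀ j k, j < k → k < i+1 → e' j < e' k) ∧
      γ ∈ Dset c lam.ord (n - zcount t' v (i+1)) (alist t' v e' (i+1)) ∧
      γ ∈ Dset c lam.ord (n - zcount t' w (i+1)) (alist t' w e' (i+1)) := by
  have hr : n - zcount t' v i = (n - zcount t' v (i+1)) + 1 := by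
    have := zcount_succ t' v i
    rw [hv, if_pos rfl] at this
    omega
  rw [hr] at hQv
  -- extract a witness above the sup of all previous values
  have hbL : (Finset.range i).sup e < lam.ord := by
    rw [Finset.sup_lt_iff hlim.pos]
    intro j hj
    exact heL j (Finset.mem_range.mp hj)
  simp only [Dset, Set.mem_setOf_eq] at hQv
  obtain ⟨x, hbx, hxL, hxp, hxmem⟩ := hQv ((Finset.range i).sup e) hbL
  have hgt : ∀ j < i, e j < x := fun j hj =>
    lt_of_le_of_lt (Finset.le_sup (Finset.mem_range.mpr hj)) hbx
  refine ⟨Function.update e i x, ?_, ?_, ?_, ?_⟩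
  · intro j hj
    rcases Nat.lt_succ_iff_lt_or_eq.mp hj with h | h
    · rw [Function.update_of_ne (by omega)]; exact heL j h
    · rw [h, Function.update_self]; exact hxL
  · intro j k hjk hk
    rcases Nat.lt_succ_iff_lt_or_eq.mp hk with h | h
    · rw [Function.update_of_ne (by omega), Function.update_of_ne (by omega)]
      exact hemono j k hjk h
    · rw [h, Function.update_self, Function.update_of_ne (by omega)]
      exact hgt j (by omega)
  · have hagree : alist t' v (Function.update e i x) i = alist t' v e i :=
      alist_congr (fun j hj => Function.update_of_ne (Nat.ne_of_lt hj) x e)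
    have h1 : alist t' v (Function.update e i x) (i+1) = x :: alist t' v e i := by
      rw [alist_succ_pos t' v _ i hv, Function.update_self, hagree]
    rw [h1]
    exact hxmem
  · have hagree : alist t' w (Function.update e i x) i = alist t' w e i :=
      alist_congr (fun j hj => Function.update_of_ne (Nat.ne_of_lt hj) x e)
    have h2 : alist t' w (Function.update e i x) (i+1) = alist t' w e i := by
      rw [alist_succ_neg t' w _ i (by rw [hv]; exact hvw), hagree]
    have h3 : zcount t' w (i+1) = zcount t' w i := by
      have := zcount_succ t' w i
      rw [hv, if_neg hvw] at this
      omega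
    rw [h2, h3]
    exact hQw

def Dnonempty {β : Type} (c : Finset Ordinal → β) (lam : Cardinal) : Prop :=
  ∀ (r : ℕ) (p : List Ordinal), (∀ y ∈ p, y < lam.ord) → (Dset c lam.ord r p).Nonempty

lemma exists_mono_pattern {β : Type} {c : Finset Ordinal → β} {lam : Cardinal}
    (hlim : Order.IsSuccLimit lam.ord) (n : ℕ) (t' : ℕ → Fin 2)
    (hza : zcount t' 0 (2*n) = n) (hzb : zcount t' 1 (2*n) = n)
    (hDne : Dnonempty c lam) :
    ∃ e : ℕ → Ordinal, (∀ j < 2*n, e j < lam.ord) ∧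
      (∀ j k, j < k → k < 2*n → e j < e k) ∧
      c (alist t' 0 e (2*n)).toFinset = c (alist t' 1 e (2*n)).toFinset := by
  obtain ⟨γ, hγ⟩ := hDne n [] (by simp)
  have key : ∀ i, i ≤ 2*n → ∃ e : ℕ → Ordinal, (∀ j < i, e j < lam.ord) ∧
      (∀ j k, j < k → k < i → e j < e k) ∧
      γ ∈ Dset c lam.ord (n - zcount t' 0 i) (alist t' 0 e i) ∧
      γ ∈ Dset c lam.ord (n - zcount t' 1 i) (alist t' 1 e i) := by
    intro i
    induction i with
    | zero =>
      intro _
      exact ⟨fun _ => 0, by omega, by omega, by simpa [alist, zcount] using hγ,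
        by simpa [alist, zcount] using hγ⟩
    | succ i ih =>
      intro hi2n
      obtain ⟨e, heL, hemono, ha, hb⟩ := ih (by omega)
      rcases fin2_cases (t' i) with hv | hv
      · obtain ⟨e', h1, h2, h3, h4⟩ := step_lemma hlim (v := 0) (w := 1) (by decide)
          e heL hemono ha hb hv (zcount_lt (by omega) hv hza)
        exact ⟨e', h1, h2, h3, h4⟩
      · obtain ⟨e', h1, h2, h3, h4⟩ := step_lemma hlim (v := 1) (w := 0) (by decide)
          e heL hemono hb ha hv (zcount_lt (by omega) hv hzb)
        exact ⟨e', h1, h2, h4, h3⟩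
  obtain ⟨e, heL, hemono, ha, hb⟩ := key (2*n) le_rfl
  rw [hza, Nat.sub_self] at ha
  rw [hzb, Nat.sub_self] at hb
  refine ⟨e, heL, hemono, ?_⟩
  simp only [Dset, Set.mem_singleton_iff] at ha hb
  rw [← ha, ← hb]


def tnat (n : ℕ) (t : Fin (2 * n) → Fin 2) : ℕ → Fin 2 := fun j =>
  if h : j < 2 * n then t ⟨j, h⟩ else 0


lemma zcount_eq_card (t' : ℕ → Fin 2) (v : Fin 2) (i : ℕ) :
    zcount t' v i = ((Finset.range i).filter fun j => t' j = v).card := rfl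

lemma tnat_special_eq_zero_iff {n s j : ℕ} (h : j < 2*n) :
    tnat n (specialType n s) j = 0 ↔ (j < s ∨ (j < 2*n - s ∧ (j - s) % 2 = 0)) := by
  unfold tnat specialType
  rw [dif_pos h]
  simp only []
  split_ifs with h1 h2 h3 <;> simp_all <;> omega

lemma card_zeros (n s : ℕ) (hs : 1 ≤ s) (hsn : s + 1 ≤ n) :
    zcount (tnat n (specialType n s)) 0 (2*n) = n := by
  rw [zcount_eq_card]
  have key : (Finset.range n).card
      = ((Finset.range (2*n)).filter fun j => tnat n (specialType n s) j = 0).card := by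
    apply Finset.card_bij' (i := fun k _ => if k < s then k else 2*k - s)
      (j := fun j _ => if j < s then j else (j+s)/2)
    · intro k hk
      rw [Finset.mem_range] at hk
      rw [Finset.mem_filter, Finset.mem_range]
      split_ifs with h1
      · constructor
        · omega
        · rw [tnat_special_eq_zero_iff (by omega)]; omega
      · constructor
        · omega
        · rw [tnat_special_eq_zero_iff (by omega)]; omega
    · intro j hj
      rw [Finset.mem_filter, Finset.mem_range] at hj
      obtain ⟨hj2n, hj0⟩ := hj
      rw [tnat_special_eq_zero_iff hj2n] at hj0
      rw [Finset.mem_range]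
      split_ifs with h1 <;> omega
    · intro k hk
      rw [Finset.mem_range] at hk
      split_ifs <;> omega
    · intro j hj
      rw [Finset.mem_filter, Finset.mem_range] at hj
      obtain ⟨hj2n, hj0⟩ := hj
      rw [tnat_special_eq_zero_iff hj2n] at hj0
      split_ifs <;> omega
  rw [Finset.card_range] at key
  exact key.symm


lemma lam_props (β : Type) (κ : Cardinal.{0}) (hκ : ℵ₀ ≤ κ) (hβ : #β < κ) :
    ∃ lam : Cardinal.{0}, lam.IsRegular ∧ #β < lam ∧ lam ≤ κ := by
  by_cases h : #β < ℵ₀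
  · exact ⟨ℵ₀, Cardinal.isRegular_aleph0, h, hκ⟩
  · exact ⟨Order.succ #β, Cardinal.isRegular_succ (not_lt.mp h), Order.lt_succ _,
      Order.succ_le_of_lt hβ⟩

lemma add_nat_lt_of_isLimit {o : Ordinal} (ho : Order.IsSuccLimit o) {a : Ordinal} (ha : a < o) (k : ℕ) :
    a + k < o := by
  induction k with
  | zero => simpa using ha
  | succ k ih =>
    rw [Nat.cast_succ, ← add_assoc, Ordinal.add_one_eq_succ]
    exact ho.succ_lt ih

lemma zcount_add (t' : ℕ → Fin 2) (i : ℕ) : zcount t' 0 i + zcount t' 1 i = i := by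
  induction i with
  | zero => simp [zcount]
  | succ i ih =>
    have h0 := zcount_succ t' 0 i
    have h1 := zcount_succ t' 1 i
    rcases fin2_cases (t' i) with h | h <;> rw [h] at h0 h1 <;> simp at h0 h1 <;> omega

lemma no_small_coloring (s n : ℕ) (hs : 1 ≤ s) (hsn : s + 1 ≤ n)
    (κ : Cardinal.{0}) (hκ : Cardinal.aleph0 ≤ κ) (β : Type) (hβ : Cardinal.mk β < κ) :
    IsEmpty ((SpeckerGraph κ.ord n (specialType n s)).Coloring β) := by
  constructor
  intro C
  have hκlim : Order.IsSuccLimit κ.ord := Cardinal.isSuccLimit_ord hκ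
  -- a base vertex (for a default value)
  have hv0 : ((Finset.range n).image fun k : ℕ => ((0 : Ordinal) + (k : Ordinal))).card = n ∧
      ∀ y ∈ (Finset.range n).image fun k : ℕ => ((0 : Ordinal) + (k : Ordinal)), y < κ.ord := by
    constructor
    · rw [Finset.card_image_of_injOn, Finset.card_range]
      intro j _ k _ h
      rwa [add_right_inj, Nat.cast_inj] at h
    · intro y hy
      rw [Finset.mem_image] at hy
      obtain ⟨k, _, rfl⟩ := hy
      exact add_nat_lt_of_isLimit hκlim hκlim.pos k
  set v0 : SpeckerVerts κ.ord n := ⟨_, hv0⟩ with hv0def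
  -- the total coloring function
  set c : Finset Ordinal → β := fun x =>
    if h : x.card = n ∧ ∀ y ∈ x, y < κ.ord then C ⟨x, h⟩ else C v0 with hcdef
  obtain ⟨lam, hreg, hβlam, hlamκ⟩ := lam_props β κ hκ hβ
  have hlim : Order.IsSuccLimit lam.ord := Cardinal.isSuccLimit_ord hreg.aleph0_le
  have hordle : lam.ord ≤ κ.ord := Cardinal.ord_le_ord.mpr hlamκ
  have hDne : Dnonempty c lam := Dset_nonempty hreg hβlam
  set t' : ℕ → Fin 2 := tnat n (specialType n s) with ht'def
  have hza : zcount t' 0 (2*n) = n := card_zeros n s hs hsn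
  have hzb : zcount t' 1 (2*n) = n := by
    have := zcount_add t' (2*n)
    omega
  obtain ⟨e, heL, hemono, hcc⟩ := exists_mono_pattern hlim n t' hza hzb hDne
  have hinj : ∀ j k, j < 2*n → k < 2*n → e j = e k → j = k := by
    intro j k hj hk hjk
    rcases lt_trichotomy j k with h | h | h
    · exact absurd hjk (ne_of_lt (hemono j k h hk))
    · exact h
    · exact absurd hjk.symm (ne_of_lt (hemono k j h hj))
  set A : Finset Ordinal := (alist t' 0 e (2*n)).toFinset with hAdef
  set B : Finset Ordinal := (alist t' 1 e (2*n)).toFinset with hBdef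
  have hA_img : A = ((Finset.range (2*n)).filter fun j => t' j = 0).image e :=
    alist_toFinset t' 0 e (2*n)
  have hB_img : B = ((Finset.range (2*n)).filter fun j => t' j = 1).image e :=
    alist_toFinset t' 1 e (2*n)
  have hfilterInj : ∀ v : Fin 2, Set.InjOn e ((Finset.range (2*n)).filter fun j => t' j = v) := by
    intro v j hj k hk hjk
    simp only [Finset.coe_filter, Set.mem_setOf_eq, Finset.mem_range] at hj hk
    exact hinj j k hj.1 hk.1 hjk
  have hAcard : A.card = n := by
    rw [hA_img, Finset.card_image_of_injOn (hfilterInj 0), ← zcount_eq_card, hza]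
  have hBcard : B.card = n := by
    rw [hB_img, Finset.card_image_of_injOn (hfilterInj 1), ← zcount_eq_card, hzb]
  have hmemA : ∀ y ∈ A, ∃ j, j < 2*n ∧ t' j = 0 ∧ e j = y := by
    intro y hy
    rw [hA_img, Finset.mem_image] at hy
    obtain ⟨j, hj, rfl⟩ := hy
    rw [Finset.mem_filter, Finset.mem_range] at hj
    exact ⟨j, hj.1, hj.2, rfl⟩
  have hmemB : ∀ y ∈ B, ∃ j, j < 2*n ∧ t' j = 1 ∧ e j = y := by
    intro y hy
    rw [hB_img, Finset.mem_image] at hy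
    obtain ⟨j, hj, rfl⟩ := hy
    rw [Finset.mem_filter, Finset.mem_range] at hj
    exact ⟨j, hj.1, hj.2, rfl⟩
  have hAlt : ∀ y ∈ A, y < κ.ord := by
    intro y hy
    obtain ⟨j, hj, _, rfl⟩ := hmemA y hy
    exact lt_of_lt_of_le (heL j hj) hordle
  have hBlt : ∀ y ∈ B, y < κ.ord := by
    intro y hy
    obtain ⟨j, hj, _, rfl⟩ := hmemB y hy
    exact lt_of_lt_of_le (heL j hj) hordle
  have hdisj : Disjoint A B := by
    rw [Finset.disjoint_left]
    intro y hyA hyB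
    obtain ⟨j, hj, hj0, hje⟩ := hmemA y hyA
    obtain ⟨k, hk, hk1, hke⟩ := hmemB y hyB
    have := hinj k j hk hj (hke.trans hje.symm)
    rw [this, hj0] at hk1
    exact absurd hk1 (by decide)
  have hne : A ≠ B := by
    intro h
    rw [h, disjoint_self] at hdisj
    rw [hdisj] at hBcard
    simp at hBcard
    omega
  have hUnion : A ∪ B = (Finset.range (2*n)).image e := by
    ext y
    rw [Finset.mem_union, hA_img, hB_img]
    simp only [Finset.mem_image, Finset.mem_filter, Finset.mem_range]
    constructor
    · rintro (⟨j, ⟨hj, _⟩, rfl⟩ | ⟨j, ⟨hj, _⟩, rfl⟩) <;> exact ⟨j, hj, rfl⟩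
    · rintro ⟨j, hj, rfl⟩
      rcases fin2_cases (t' j) with h | h
      · exact Or.inl ⟨j, ⟨hj, h⟩, rfl⟩
      · exact Or.inr ⟨j, ⟨hj, h⟩, rfl⟩
  have hUcard : (A ∪ B).card = 2*n := by
    rw [hUnion, Finset.card_image_of_injOn, Finset.card_range]
    intro j hj k hk hjk
    simp only [Finset.coe_range, Set.mem_Iio] at hj hk
    exact hinj j k hj hk hjk
  -- the orderIso is e
  have hofe : ∀ i : Fin (2*n), (((A ∪ B).orderIsoOfFin hUcard i : Ordinal)) = e ↑i := by
    have hmono : StrictMono (fun i : Fin (2*n) => e ↑i) := fun i j hij => hemono _ _ hij j.isLt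
    have hfs : ∀ x : Fin (2*n), e ↑x ∈ A ∪ B := by
      intro x
      rw [hUnion, Finset.mem_image]
      exact ⟨↑x, Finset.mem_range.mpr x.isLt, rfl⟩
    have huniq := Finset.orderEmbOfFin_unique hUcard hfs hmono
    intro i
    rw [Finset.coe_orderIsoOfFin_apply, ← huniq]
  have ht'fin : ∀ i : Fin (2*n), t' ↑i = specialType n s i := by
    intro i
    rw [ht'def]
    unfold tnat
    rw [dif_pos i.isLt]
  have htype : HasType n A B (specialType n s) := by
    refine ⟨hAcard, hBcard, hUcard, ?_⟩
    intro i
    rw [hofe i]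
    constructor
    · intro hmem
      obtain ⟨j, hj, hj0, hje⟩ := hmemA _ hmem
      rw [← ht'fin i, ← hinj j ↑i hj i.isLt hje]
      exact hj0
    · intro h0
      rw [hA_img, Finset.mem_image]
      refine ⟨↑i, ?_, rfl⟩
      rw [Finset.mem_filter, Finset.mem_range]
      exact ⟨i.isLt, by rw [ht'fin i]; exact h0⟩
  -- contradiction with properness
  set vA : SpeckerVerts κ.ord n := ⟨A, hAcard, hAlt⟩ with hvAdef
  set vB : SpeckerVerts κ.ord n := ⟨B, hBcard, hBlt⟩ with hvBdef
  have hadj : (SpeckerGraph κ.ord n (specialType n s)).Adj vA vB := by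
    show _ ∧ _
    refine ⟨?_, hdisj, Or.inl htype⟩
    intro h
    exact hne (congrArg Subtype.val h)
  have hvalid := C.valid hadj
  apply hvalid
  have h1 : c A = C vA := by rw [hcdef]; exact dif_pos ⟨hAcard, hAlt⟩
  have h2 : c B = C vB := by rw [hcdef]; exact dif_pos ⟨hBcard, hBlt⟩
  rw [← h1, ← h2]
  exact hcc

lemma vertSet_spec (n : ℕ) {o : Ordinal} (ho : Order.IsSuccLimit o) {α : Ordinal} (hα : α < o) :
    ((Finset.range n).image fun k : ℕ => (α + (k : Ordinal))).card = n ∧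
      ∀ y ∈ (Finset.range n).image fun k : ℕ => (α + (k : Ordinal)), y < o := by
  constructor
  · rw [Finset.card_image_of_injOn, Finset.card_range]
    intro j _ k _ h
    rwa [add_right_inj, Nat.cast_inj] at h
  · intro y hy
    rw [Finset.mem_image] at hy
    obtain ⟨k, _, rfl⟩ := hy
    exact add_nat_lt_of_isLimit ho hα k

lemma card_verts (n : ℕ) (hn : 1 ≤ n) (κ : Cardinal.{0}) (hκ : Cardinal.aleph0 ≤ κ) :
    Cardinal.mk (SpeckerVerts κ.ord n) = Cardinal.lift.{1} κ := by
  classical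
  have hκlim : Order.IsSuccLimit κ.ord := Cardinal.isSuccLimit_ord hκ
  have hIio : #(Set.Iio κ.ord) = Cardinal.lift.{1} κ := by
    rw [Ordinal.mk_Iio_ordinal, Cardinal.card_ord]
  have hinf : Infinite (Set.Iio κ.ord) := by
    rw [Cardinal.infinite_iff, hIio]
    exact Cardinal.aleph0_le_lift.mpr hκ
  apply le_antisymm
  · have hup : #(SpeckerVerts κ.ord n) ≤ #(Finset (Set.Iio κ.ord)) := by
      apply Cardinal.mk_le_of_injective
        (f := fun x : SpeckerVerts κ.ord n => x.1.subtype (fun o => o < κ.ord))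
      intro x y h
      apply Subtype.ext
      have h2 := congrArg (Finset.map (Function.Embedding.subtype fun o => o < κ.ord)) h
      rwa [Finset.subtype_map, Finset.subtype_map, Finset.filter_true_of_mem x.2.2,
        Finset.filter_true_of_mem y.2.2] at h2
    rwa [Cardinal.mk_finset_of_infinite, hIio] at hup
  · rw [← hIio]
    apply Cardinal.mk_le_of_injective
      (f := fun α : Set.Iio κ.ord =>
        (⟨_, vertSet_spec n hκlim α.2⟩ : SpeckerVerts κ.ord n))
    intro α α' h
    have h2 := congrArg Subtype.val h
    simp only at h2
    have hmem : ∀ γ : Set.Iio κ.ord, (γ : Ordinal) ∈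
        (Finset.range n).image fun k : ℕ => ((γ : Ordinal) + (k : Ordinal)) := by
      intro γ
      rw [Finset.mem_image]
      exact ⟨0, Finset.mem_range.mpr (by omega), by simp⟩
    have hle : ∀ (γ : Set.Iio κ.ord) (y : Ordinal), y ∈
        ((Finset.range n).image fun k : ℕ => ((γ : Ordinal) + (k : Ordinal))) →
        (γ : Ordinal) ≤ y := by
      intro γ y hy
      rw [Finset.mem_image] at hy
      obtain ⟨k, _, rfl⟩ := hy
      exact le_self_add
    apply Subtype.ext
    apply le_antisymm
    · exact hle α _ (h2.symm ▸ hmem α')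
    · exact hle α' _ (h2 ▸ hmem α)

lemma exists_coloring (s n : ℕ) (κ : Cardinal.{0}) (hn : 1 ≤ n) (hκ : Cardinal.aleph0 ≤ κ) :
    ∃ β : Type, Cardinal.mk β = κ ∧
      Nonempty ((SpeckerGraph κ.ord n (specialType n s)).Coloring β) := by
  refine ⟨κ.out, Cardinal.mk_out κ, ?_⟩
  have h1 : #(SpeckerVerts κ.ord n) = #(ULift.{1} κ.out) := by
    rw [card_verts n hn κ hκ, Cardinal.mk_uLift, Cardinal.mk_out]
  obtain ⟨eqv⟩ := Cardinal.eq.mp h1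
  refine ⟨SimpleGraph.Coloring.mk (fun v => (eqv v).down) ?_⟩
  intro a b hadj h
  exact (show _ ∧ _ from hadj).1 (eqv.injective (ULift.ext _ _ h))

end Aux

/-- For `1 ≤ s ≤ n - 1` and an infinite cardinal `κ`, the Specker graph `G(κ, t^n_s)` has
`κ` many vertices and chromatic number exactly `κ`. -/
theorem specker_graph_card_and_chromatic (s n : ℕ) (hs : 1 ≤ s) (hsn : s ≤ n - 1)
    (κ : Cardinal.{0}) (hκ : Cardinal.aleph0 ≤ κ) :
    Cardinal.mk (SpeckerVerts κ.ord n) = Cardinal.lift.{1} κ ∧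
    (∃ β : Type, Cardinal.mk β = κ ∧
      Nonempty ((SpeckerGraph κ.ord n (specialType n s)).Coloring β)) ∧
    (∀ β : Type, Cardinal.mk β < κ →
      IsEmpty ((SpeckerGraph κ.ord n (specialType n s)).Coloring β)) := by
  have hsn' : s + 1 ≤ n := by omega
  exact ⟨card_verts n (by omega) κ hκ, exists_coloring s n κ (by omega) hκ,
    fun β hβ => no_small_coloring s n hs hsn' κ hκ β hβ⟩
end

section
/- Let s and n be natural numbers with 1 ≤ s ≤ n−1 and suppose n ≥ 2s² + 1. Then for every ordinal α, the Specker graph G(α, t^n_s) contains no odd cycle of length 2s + 1 or shorter. -/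
open Cardinal

lemma specker_extract {n s : ℕ} (hs : 1 ≤ s) (hsn : s + 1 ≤ n) {a b : Finset Ordinal}
    (ht : HasType n a b (specialType n s)) (ha : a.card = n) (hb : b.card = n) :
    (∀ i, ∀ h1 : i + s < n,
        a.orderEmbOfFin ha ⟨i + s, h1⟩ < b.orderEmbOfFin hb ⟨i, by omega⟩) ∧
    (∀ i, ∀ h1 : i + s + 1 < n,
        b.orderEmbOfFin hb ⟨i, by omega⟩ < a.orderEmbOfFin ha ⟨i + s + 1, h1⟩) ∧
    a.orderEmbOfFin ha ⟨n - 1, by omega⟩ < b.orderEmbOfFin hb ⟨n - 1, by omega⟩ := by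
  obtain ⟨ha', hb', h, hmem⟩ := ht
  set e := (a ∪ b).orderEmbOfFin h with he
  have hmem' : ∀ i : Fin (2 * n), (e i ∈ a ↔ specialType n s i = 0) := by
    intro i; rw [he, ← Finset.coe_orderIsoOfFin_apply]; exact hmem i
  have hmemb : ∀ i : Fin (2 * n), specialType n s i = 1 → e i ∈ b := by
    intro i hi
    have hu := Finset.orderEmbOfFin_mem (a ∪ b) h i
    rcases Finset.mem_union.1 hu with hx | hx
    · exact absurd ((hmem' i).1 hx) (by rw [hi]; decide)
    · exact hx
  have hA : ∀ (kv : ℕ) (hk : kv < n), a.orderEmbOfFin ha ⟨kv, hk⟩ =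
      e ⟨if kv < s then kv else 2 * kv - s, by split <;> omega⟩ := by
    have hu := Finset.orderEmbOfFin_unique (f := fun k : Fin n =>
        e ⟨if (k : ℕ) < s then (k : ℕ) else 2 * (k : ℕ) - s,
          by have := k.isLt; split <;> omega⟩) ha ?_ ?_
    · intro kv hk; exact (congrFun hu ⟨kv, hk⟩).symm
    · intro k
      apply (hmem' _).2
      simp only [specialType]
      split_ifs <;> first | rfl | omega
    · intro k k' hlt
      apply e.strictMono
      have h1 := k.isLt; have h2 := k'.isLt
      have : (k : ℕ) < (k' : ℕ) := hlt
      simp only [Fin.mk_lt_mk]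
      split_ifs <;> omega
  have hB : ∀ (kv : ℕ) (hk : kv < n), b.orderEmbOfFin hb ⟨kv, hk⟩ =
      e ⟨if kv < n - s then 2 * kv + s + 1 else n + kv, by split <;> omega⟩ := by
    have hu := Finset.orderEmbOfFin_unique (f := fun k : Fin n =>
        e ⟨if (k : ℕ) < n - s then 2 * (k : ℕ) + s + 1 else n + (k : ℕ),
          by have := k.isLt; split <;> omega⟩) hb ?_ ?_
    · intro kv hk; exact (congrFun hu ⟨kv, hk⟩).symm
    · intro k
      apply hmemb
      have := k.isLt
      simp only [specialType]
      split_ifs <;> first | rfl | omega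
    · intro k k' hlt
      apply e.strictMono
      have h1 := k.isLt; have h2 := k'.isLt
      have : (k : ℕ) < (k' : ℕ) := hlt
      simp only [Fin.mk_lt_mk]
      split_ifs <;> omega
  refine ⟨?_, ?_, ?_⟩
  · intro i h1
    rw [hA, hB]
    apply e.strictMono
    simp only [Fin.mk_lt_mk]
    split_ifs <;> omega
  · intro i h1
    rw [hA, hB]
    apply e.strictMono
    simp only [Fin.mk_lt_mk]
    split_ifs <;> omega
  · rw [hA, hB]
    apply e.strictMono
    simp only [Fin.mk_lt_mk]
    split_ifs <;> omega

lemma specker_core (n s ℓ : ℕ) (hs : 1 ≤ s) (hn : 2 * s ^ 2 + 1 ≤ n)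
    (hodd : Odd ℓ) (hl : ℓ ≤ 2 * s + 1)
    (A : ℕ → ℕ → Ordinal)
    (hmono : ∀ k i i', i ≤ i' → i' < n → A k i ≤ A k i')
    (hA0 : ∀ i, A ℓ i = A 0 i)
    (d : ℕ → Bool)
    (hfwd : ∀ k, k < ℓ → d k = true →
      (∀ i, i + s < n → A k (i + s) < A (k + 1) i) ∧ A k (n - 1) < A (k + 1) (n - 1))
    (hbwd : ∀ k, k < ℓ → d k = false →
      (∀ i, i + s + 1 < n → A k i < A (k + 1) (i + s + 1)))
    (hp : ℓ < 2 * ((Finset.range ℓ).filter (fun k => d k = true)).card) :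
    False := by
  classical
  have hl1 : 1 ≤ ℓ := hodd.pos
  set F : ℕ → ℕ := fun k => ((Finset.range k).filter (fun j => d j = true)).card with hF
  have hp2 : ℓ < 2 * F ℓ := hp
  have hFsucc : ∀ k, F (k + 1) = if d k = true then F k + 1 else F k := by
    intro k
    simp only [hF, Finset.range_add_one, Finset.filter_insert]
    split_ifs with h
    · rw [Finset.card_insert_of_notMem]
      intro hmem
      exact Finset.notMem_range_self (Finset.filter_subset _ _ hmem)
    · rfl
  have hFmono : Monotone F := monotone_nat_of_le_succ (by
    intro k; rw [hFsucc]; split <;> omega)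
  have hbsucc : ∀ k, F k ≤ k ∧ k - F k ≤ (k + 1) - F (k + 1) := by
    intro k
    have h2 : F k ≤ k := le_trans (Finset.card_filter_le _ _) (by simp [hF])
    refine ⟨h2, ?_⟩
    have h1 := hFsucc k
    split at h1 <;> omega
  have hFle : ∀ k, F k ≤ k := fun k => (hbsucc k).1
  have hbmono : Monotone (fun k => k - F k) := monotone_nat_of_le_succ (fun k => (hbsucc k).2)
  have hpl : F ℓ ≤ ℓ := hFle ℓ
  have hpq : ℓ - F ℓ < F ℓ := by omega
  have hqs : ℓ - F ℓ ≤ s := by omega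
  by_cases hq0 : F ℓ = ℓ
  · have halltrue : ∀ k, k < ℓ → d k = true := by
      intro k hk
      have hcard : ((Finset.range ℓ).filter (fun j => d j = true)).card = (Finset.range ℓ).card := by
        rw [Finset.card_range]; exact hq0
      exact Finset.card_filter_eq_iff.1 hcard k (Finset.mem_range.2 hk)
    have key : ∀ k, k ≤ ℓ → 1 ≤ k → A 0 (n - 1) < A k (n - 1) := by
      intro k
      induction k with
      | zero => omega
      | succ m ih =>
        intro hk _
        rcases Nat.eq_zero_or_pos m with rfl | hm
        · exact (hfwd 0 (by omega) (halltrue 0 (by omega))).2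
        · exact lt_trans (ih (by omega) hm)
            ((hfwd m (by omega) (halltrue m (by omega))).2)
    have := key ℓ le_rfl hl1
    rw [hA0] at this
    exact lt_irrefl _ this
  · have hq1 : 1 ≤ ℓ - F ℓ := by omega
    have hp2s : F ℓ ≤ 2 * s := by omega
    set D : ℕ → ℤ := fun k => (s + 1) * ((k : ℤ) - F k) - s * F k with hD
    have hDsucc : ∀ k, D (k + 1) = if d k = true then D k - s else D k + (s + 1) := by
      intro k
      have h1 := hFsucc k
      simp only [hD]
      split_ifs with h <;> rw [h1] <;> simp [h] <;> push_cast <;> ring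
    have hdiff : ∀ k k', k ≤ k' → k' ≤ ℓ →
        D k' - D k ≤ (s + 1) * ((ℓ : ℤ) - F ℓ) ∧ D k - D k' ≤ s * F ℓ := by
      intro k k' hkk' hk'
      have h1 : F k ≤ F k' := hFmono hkk'
      have h2 : F k' ≤ F ℓ := hFmono hk'
      have h3 : k - F k ≤ k' - F k' := hbmono hkk'
      have h4 : k' - F k' ≤ ℓ - F ℓ := hbmono hk'
      have h5 : F k ≤ k := hFle k
      have h6 : F k' ≤ k' := hFle k'
      have e1 : D k' - D k = (s + 1) * (((k' : ℤ) - F k') - ((k : ℤ) - F k))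
          - s * ((F k' : ℤ) - F k) := by simp only [hD]; ring
      have t1 : (s + 1 : ℤ) * (((k' : ℤ) - F k') - ((k : ℤ) - F k)) ≤
          (s + 1) * ((ℓ : ℤ) - F ℓ) := by
        apply mul_le_mul_of_nonneg_left _ (by positivity)
        omega
      have t2 : (0 : ℤ) ≤ s * ((F k' : ℤ) - F k) := by
        apply mul_nonneg (by positivity); omega
      have t3 : (s : ℤ) * ((F k' : ℤ) - F k) ≤ s * F ℓ := by
        apply mul_le_mul_of_nonneg_left _ (by positivity)
        omega
      have t4 : (0 : ℤ) ≤ (s + 1 : ℤ) * (((k' : ℤ) - F k') - ((k : ℤ) - F k)) := by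
        apply mul_nonneg (by positivity); omega
      constructor
      · linarith
      · linarith
    have hbound : ∀ k k', k ≤ ℓ → k' ≤ ℓ → D k' - D k ≤ 2 * s ^ 2 := by
      intro k k' hk hk'
      have hsq : ((ℓ : ℤ) - F ℓ) ≤ s := by omega
      have b1 : (s + 1 : ℤ) * ((ℓ : ℤ) - F ℓ) ≤ 2 * s ^ 2 := by
        have h0 : (s + 1 : ℤ) * ((ℓ : ℤ) - F ℓ) ≤ (s + 1) * s :=
          mul_le_mul_of_nonneg_left hsq (by positivity)
        have hs' : (1 : ℤ) ≤ s := by exact_mod_cast hs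
        nlinarith
      have b2 : (s : ℤ) * F ℓ ≤ 2 * s ^ 2 := by
        have h0 : (s : ℤ) * F ℓ ≤ s * (2 * s) := by
          apply mul_le_mul_of_nonneg_left _ (by positivity)
          exact_mod_cast hp2s
        nlinarith
      rcases le_total k k' with hle | hle
      · exact le_trans (hdiff k k' hle hk').1 b1
      · exact le_trans (hdiff k' k hle hk).2 b2
    obtain ⟨km, hkm_mem, hkm⟩ := (Finset.range (ℓ + 1)).exists_max_image D ⟨0, by simp⟩
    have hkmle : km ≤ ℓ := by simpa [Nat.lt_succ_iff] using Finset.mem_range.1 hkm_mem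
    set j : ℕ → ℤ := fun k => (n : ℤ) - 1 - D km + D k with hj
    have hub : ∀ k, k ≤ ℓ → j k ≤ (n : ℤ) - 1 := by
      intro k hk
      have := hkm k (Finset.mem_range.2 (by omega))
      simp only [hj]; omega
    have hlb : ∀ k, k ≤ ℓ → 0 ≤ j k := by
      intro k hk
      have := hbound k km hk hkmle
      have hn' : 2 * (s : ℤ) ^ 2 ≤ (n : ℤ) - 1 := by
        have h9 : ((2 * s ^ 2 + 1 : ℕ) : ℤ) ≤ (n : ℤ) := by exact_mod_cast hn
        push_cast at h9; linarith
      simp only [hj]; linarith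
    have hjn : ∀ k, k ≤ ℓ → (j k).toNat < n ∧ ((j k).toNat : ℤ) = j k := by
      intro k hk
      have h1 := hub k hk; have h2 := hlb k hk
      omega
    have step : ∀ k, k < ℓ → A k (j k).toNat < A (k + 1) (j (k + 1)).toNat := by
      intro k hk
      have hjk := hjn k (by omega)
      have hjk1 := hjn (k + 1) (by omega)
      have hDs := hDsucc k
      cases hdk : d k with
      | true =>
        rw [hdk] at hDs; simp only [if_true] at hDs
        have hrel : (j (k + 1)).toNat + s = (j k).toNat := by
          have : j (k + 1) = j k - s := by simp only [hj]; omega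
          omega
        have := (hfwd k hk hdk).1 (j (k + 1)).toNat (by omega)
        rwa [hrel] at this
      | false =>
        rw [hdk] at hDs; simp only [Bool.false_eq_true, if_false] at hDs
        have hrel : (j k).toNat + s + 1 = (j (k + 1)).toNat := by
          have : j (k + 1) = j k + (s + 1) := by simp only [hj]; omega
          omega
        have := hbwd k hk hdk (j k).toNat (by omega)
        rwa [hrel] at this
    have key : ∀ k, k ≤ ℓ → 1 ≤ k → A 0 (j 0).toNat < A k (j k).toNat := by
      intro k
      induction k with
      | zero => omega
      | succ m ih =>
        intro hk _
        rcases Nat.eq_zero_or_pos m with rfl | hm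
        · exact step 0 (by omega)
        · exact lt_trans (ih (by omega) hm) (step m (by omega))
    have hfin := key ℓ le_rfl hl1
    rw [hA0] at hfin
    have hDl : D ℓ ≤ 0 := by
      have e2 : D ℓ = (s + 1) * ((ℓ : ℤ) - F ℓ) - s * F ℓ := by simp only [hD]
      have h1 : (ℓ : ℤ) - F ℓ ≤ s := by omega
      have h2 : (ℓ : ℤ) - F ℓ + 1 ≤ F ℓ := by omega
      have hs' : (1 : ℤ) ≤ s := by exact_mod_cast hs
      nlinarith
    have hD0 : D 0 = 0 := by simp [hD, hF]
    have hjle : (j ℓ).toNat ≤ (j 0).toNat := by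
      have h1 := hjn ℓ le_rfl; have h2 := hjn 0 (by omega)
      have : j ℓ ≤ j 0 := by simp only [hj]; omega
      omega
    exact absurd (hmono 0 _ _ hjle (hjn 0 (by omega)).1) (not_le.2 hfin)

/-- For `1 ≤ s ≤ n - 1` with `n ≥ 2s² + 1`, for every ordinal `α` the Specker graph
`G(α, t^n_s)` contains no odd cycle of length `2s + 1` or shorter. -/
theorem specker_graph_no_short_odd_cycles (s n : ℕ) (hs : 1 ≤ s) (hsn : s ≤ n - 1)
    (hn : 2 * s ^ 2 + 1 ≤ n) (α : Ordinal) :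
    ∀ (v : SpeckerVerts α n) (c : (SpeckerGraph α n (specialType n s)).Walk v v),
      c.IsCycle → Odd c.length → 2 * s + 1 < c.length := by
  classical
  intro v c _hcyc hodd
  by_contra hshort
  push_neg at hshort
  set ℓ := c.length with hldef
  have hoddl : Odd ℓ := hodd
  have hshortl : ℓ ≤ 2 * s + 1 := hshort
  have hl1 : 1 ≤ ℓ := hoddl.pos
  have hsn' : s + 1 ≤ n := by nlinarith
  set V : ℕ → SpeckerVerts α n := fun k => c.getVert k with hV
  have hVl : V ℓ = V 0 := by
    simp only [hV, hldef, SimpleGraph.Walk.getVert_length, SimpleGraph.Walk.getVert_zero]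
  set d : ℕ → Bool := fun k => decide (HasType n (V k).1 (V (k + 1)).1 (specialType n s)) with hd
  have hedge : ∀ k, k < ℓ →
      (d k = true → HasType n (V k).1 (V (k + 1)).1 (specialType n s)) ∧
      (d k = false → HasType n (V (k + 1)).1 (V k).1 (specialType n s)) := by
    intro k hk
    have hadj : (SpeckerGraph α n (specialType n s)).Adj (V k) (V (k + 1)) := c.adj_getVert_succ hk
    obtain ⟨hne, hdis, hty⟩ := hadj
    constructor
    · intro h; exact of_decide_eq_true h
    · intro h
      have hnot : ¬ HasType n (V k).1 (V (k + 1)).1 (specialType n s) := of_decide_eq_false h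
      tauto
  set A : ℕ → ℕ → Ordinal :=
    fun k i => if h : i < n then (V k).1.orderEmbOfFin (V k).2.1 ⟨i, h⟩ else 0 with hA
  have hmono : ∀ k i i', i ≤ i' → i' < n → A k i ≤ A k i' := by
    intro k i i' hii hi'
    simp only [hA]
    rw [dif_pos (lt_of_le_of_lt hii hi'), dif_pos hi']
    exact ((V k).1.orderEmbOfFin (V k).2.1).monotone (Fin.mk_le_mk.mpr hii)
  have hA0 : ∀ i, A ℓ i = A 0 i := by
    intro i; simp only [hA, hVl]
  have hEF : ∀ k k' : ℕ, HasType n (V k).1 (V k').1 (specialType n s) →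
      (∀ i, i + s < n → A k (i + s) < A k' i) ∧
      (∀ i, i + s + 1 < n → A k' i < A k (i + s + 1)) ∧
      A k (n - 1) < A k' (n - 1) := by
    intro k k' hty
    obtain ⟨e1, e2, e3⟩ := specker_extract hs hsn' hty (V k).2.1 (V k').2.1
    refine ⟨fun i h1 => ?_, fun i h1 => ?_, ?_⟩
    · simp only [hA]
      rw [dif_pos h1, dif_pos (by omega : i < n)]
      exact e1 i h1
    · simp only [hA]
      rw [dif_pos (by omega : i < n), dif_pos h1]
      exact e2 i h1
    · simp only [hA]
      rw [dif_pos (by omega : n - 1 < n), dif_pos (by omega : n - 1 < n)]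
      exact e3
  set p := ((Finset.range ℓ).filter (fun k => d k = true)).card with hpdef
  rcases Nat.lt_or_ge ℓ (2 * p) with hcase | hcase
  · -- majority forward: apply core directly
    refine specker_core n s ℓ hs hn hoddl hshortl A hmono hA0 d ?_ ?_ hcase
    · intro k hk hdk
      have hty := (hedge k hk).1 hdk
      obtain ⟨e1, _, e3⟩ := hEF k (k + 1) hty
      exact ⟨e1, e3⟩
    · intro k hk hdk
      have hty := (hedge k hk).2 hdk
      exact (hEF (k + 1) k hty).2.1
  · -- majority backward: apply core to the reversed data
    have hne2 : ℓ ≠ 2 * p := by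
      obtain ⟨m, hm⟩ := hoddl; omega
    set A' : ℕ → ℕ → Ordinal := fun k i => A (ℓ - k) i with hA'
    set d' : ℕ → Bool := fun k => !d (ℓ - 1 - k) with hd'
    have hcard' : ((Finset.range ℓ).filter (fun k => d' k = true)).card
        = ((Finset.range ℓ).filter (fun k => ¬ (d k = true))).card := by
      apply Finset.card_nbij' (fun k => ℓ - 1 - k) (fun k => ℓ - 1 - k)
      · intro a ha
        simp only [Finset.mem_coe, Finset.mem_filter, Finset.mem_range, hd', Bool.not_eq_true',
          Bool.not_eq_true] at ha ⊢
        obtain ⟨ha1, ha2⟩ := ha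
        exact ⟨by omega, ha2⟩
      · intro a ha
        simp only [Finset.mem_coe, Finset.mem_filter, Finset.mem_range, hd', Bool.not_eq_true',
          Bool.not_eq_true] at ha ⊢
        obtain ⟨ha1, ha2⟩ := ha
        have heq : ℓ - 1 - (ℓ - 1 - a) = a := by omega
        refine ⟨by omega, ?_⟩
        rw [heq]
        exact ha2
      · intro a ha
        simp only [Finset.mem_coe, Finset.mem_filter, Finset.mem_range] at ha ⊢
        omega
      · intro a ha
        simp only [Finset.mem_coe, Finset.mem_filter, Finset.mem_range] at ha ⊢
        omega
    have hp' : ℓ < 2 * ((Finset.range ℓ).filter (fun k => d' k = true)).card := by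
      have hsum := Finset.card_filter_add_card_filter_not
        (s := Finset.range ℓ) (fun k => d k = true)
      rw [Finset.card_range] at hsum
      rw [hcard']
      omega
    refine specker_core n s ℓ hs hn hoddl hshortl A'
      (fun k i i' h1 h2 => hmono (ℓ - k) i i' h1 h2)
      (by intro i; simp only [hA', Nat.sub_self, Nat.sub_zero]; exact (hA0 i).symm) d' ?_ ?_ hp'
    · intro k hk hdk
      have hdk2 : d (ℓ - 1 - k) = false := by
        simp only [hd', Bool.not_eq_true'] at hdk; exact hdk
      have hty := (hedge (ℓ - 1 - k) (by omega)).2 hdk2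
      have hsucc : ℓ - 1 - k + 1 = ℓ - k := by omega
      rw [hsucc] at hty
      obtain ⟨e1, _, e3⟩ := hEF (ℓ - k) (ℓ - 1 - k) hty
      have hk1 : ℓ - (k + 1) = ℓ - 1 - k := by omega
      constructor
      · intro i hi
        simp only [hA', hk1]
        exact e1 i hi
      · simp only [hA', hk1]
        exact e3
    · intro k hk hdk
      have hdk2 : d (ℓ - 1 - k) = true := by
        simp only [hd', Bool.not_eq_false'] at hdk; exact hdk
      have hty := (hedge (ℓ - 1 - k) (by omega)).1 hdk2
      have hsucc : ℓ - 1 - k + 1 = ℓ - k := by omega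
      rw [hsucc] at hty
      have hk1 : ℓ - (k + 1) = ℓ - 1 - k := by omega
      intro i hi
      simp only [hA', hk1]
      exact (hEF (ℓ - 1 - k) (ℓ - k) hty).2.1 i hi
end

section
/- (Shelah) Suppose κ < λ are regular cardinals with κ⁺ < λ, and S ⊆ S^λ_κ is stationary in λ. Then there exists a club-guessing sequence on S. -/
open Cardinal

/-- `D` is club (closed and unbounded) in the limit ordinal `l`. -/
def IsClubIn (D : Set Ordinal) (l : Ordinal) : Prop :=
  D ⊆ Set.Iio l ∧
  (∀ a < l, ∃ b ∈ D, a < b) ∧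
  (∀ a < l, a ≠ 0 → sSup (D ∩ Set.Iio a) = a → a ∈ D)

/-- `S` is stationary in `l`: it meets every club subset of `l`. -/
def IsStationaryIn (S : Set Ordinal) (l : Ordinal) : Prop :=
  ∀ D : Set Ordinal, IsClubIn D l → (S ∩ D).Nonempty

/-- The order type of a set of ordinals. -/
noncomputable def setOtp (A : Set Ordinal) : Ordinal :=
  Ordinal.type ((· < ·) : A → A → Prop)

section Aux
open Set

lemma sSup_mem_of_club {E : Set Ordinal} {l : Ordinal} (hE : IsClubIn E l)
    {s : Set Ordinal} (hs : s ⊆ E) (hne : s.Nonempty) (hlt : sSup s < l) : sSup s ∈ E := by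
  by_cases h : sSup s ∈ s
  · exact hs h
  · have hbdd : BddAbove s := ⟨l, fun x hx => ((hE.1 (hs hx)).le)⟩
    have hlt' : ∀ x ∈ s, x < sSup s := fun x hx =>
      lt_of_le_of_ne (le_csSup hbdd hx) (fun h' => h (h' ▸ hx))
    obtain ⟨x, hx⟩ := id hne
    have hne0 : sSup s ≠ 0 := fun h0 => by
      have := hlt' x hx; rw [h0] at this; exact (not_lt_of_ge zero_le) this
    refine hE.2.2 _ hlt hne0 (le_antisymm (csSup_le' ?_) ?_)
    · exact fun y hy => hy.2.le
    · refine csSup_le_csSup ⟨sSup s, fun y hy => hy.2.le⟩ hne ?_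
      exact fun y hy => ⟨hs hy, hlt' y hy⟩

lemma finite_of_strictAnti_on {s : Set Ordinal.{0}} (v : Ordinal → Ordinal)
    (hv : ∀ i ∈ s, ∀ j ∈ s, i < j → v j < v i) : s.Finite := by
  rw [← Set.not_infinite]
  intro hinf
  have hWF : s.IsWF := Ordinal.lt_wf.wellFoundedOn
  have hPWO : s.IsPWO := hWF.isPWO
  obtain ⟨g, hg⟩ := hPWO.exists_monotone_subseq (f := fun n => (hinf.natEmbedding _ n).1)
    (fun n => (hinf.natEmbedding _ n).2)
  have hinj : Function.Injective (fun n => ((hinf.natEmbedding _ (g n)) : Ordinal)) := by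
    intro a b hab
    exact g.injective ((hinf.natEmbedding _).injective (Subtype.val_injective hab))
  have hmono : StrictMono (fun n => ((hinf.natEmbedding _ (g n)) : Ordinal)) :=
    hg.strictMono_of_injective hinj
  set u : ℕ → Ordinal := fun n => ((hinf.natEmbedding _ (g n)) : Ordinal) with hu
  have hus : ∀ n, u n ∈ s := fun n => (hinf.natEmbedding _ (g n)).2
  have hdec : ∀ n, v (u (n + 1)) < v (u n) := fun n =>
    hv _ (hus n) _ (hus (n + 1)) (hmono (Nat.lt_succ_self n))
  set T : Set Ordinal := Set.range (fun n => v (u n)) with hT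
  have hne : T.Nonempty := ⟨v (u 0), 0, rfl⟩
  obtain ⟨n, hn⟩ := Ordinal.lt_wf.min_mem T hne
  exact Ordinal.lt_wf.not_lt_min T (Set.mem_range_self (n + 1)) (hn ▸ hdec n)

lemma isClubIn_Iio {lam : Cardinal.{0}} (hlam : ℵ₀ ≤ lam) :
    IsClubIn (Set.Iio lam.ord) lam.ord := by
  refine ⟨subset_rfl, fun a ha => ⟨a + 1, (Cardinal.isSuccLimit_ord hlam).succ_lt ha, lt_add_one a⟩,
    fun a ha _ _ => ha⟩

lemma exists_acc_above {lam : Cardinal.{0}} (hlam : lam.IsRegular) (hω : ℵ₀ < lam)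
    {ι : Type} [Nonempty ι] {E : ι → Set Ordinal}
    (hsub : ∀ j, E j ⊆ Set.Iio lam.ord)
    (hunb : ∀ j, ∀ a < lam.ord, ∃ b ∈ E j, a < b)
    (hι : #ι < lam) {a : Ordinal} (ha : a < lam.ord) :
    ∃ b, a < b ∧ b < lam.ord ∧ b ≠ 0 ∧ ∀ j, sSup (E j ∩ Set.Iio b) = b := by
  have hcof : lam.ord.cof = lam := hlam.cof_eq
  have hpick : ∀ j (x : Ordinal), ∃ b, x < lam.ord → b ∈ E j ∧ x < b := by
    intro j x
    by_cases hx : x < lam.ord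
    · obtain ⟨b, hb, hb'⟩ := hunb j x hx
      exact ⟨b, fun _ => ⟨hb, hb'⟩⟩
    · exact ⟨0, fun h => absurd h hx⟩
  choose p hp using hpick
  set nxt : Ordinal → Ordinal := fun x => ⨆ j, p j x with hnxt
  have hnxt_lt : ∀ x, x < lam.ord → nxt x < lam.ord := by
    intro x hx
    refine Ordinal.iSup_lt_ord (by rwa [hcof]) fun j => hsub j (hp j x hx).1
  have hnxt_gt : ∀ x, x < lam.ord → x < nxt x := by
    intro x hx
    obtain ⟨j⟩ := ‹Nonempty ι›
    exact lt_of_lt_of_le (hp j x hx).2 (Ordinal.le_iSup (fun j => p j x) j)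
  set seq : ℕ → Ordinal := fun n => nxt^[n] a with hseq
  have hseq0 : seq 0 = a := rfl
  have hseqS : ∀ n, seq (n + 1) = nxt (seq n) := fun n =>
    Function.iterate_succ_apply' nxt n a
  have hseqlt : ∀ n, seq n < lam.ord := by
    intro n; induction n with
    | zero => exact ha
    | succ n ih => rw [hseqS]; exact hnxt_lt _ ih
  have hseqmono : ∀ n, seq n < seq (n + 1) := fun n =>
    (hseqS n) ▸ hnxt_gt _ (hseqlt n)
  set b : Ordinal := ⨆ n, seq n with hb
  have hble : ∀ n, seq n ≤ b := fun n => Ordinal.le_iSup seq n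
  have hblt : lam.ord.cof = lam → b < lam.ord := by
    intro _
    refine Ordinal.iSup_lt_ord ?_ hseqlt
    rw [hcof, Cardinal.mk_nat]; exact hω
  have hblt' : b < lam.ord := hblt hcof
  have hslt : ∀ n, seq n < b := fun n => lt_of_lt_of_le (hseqmono n) (hble (n + 1))
  have hab : a < b := hseq0 ▸ hslt 0
  refine ⟨b, hab, hblt', fun h0 => by
      have := hslt 0; rw [h0] at this; exact (not_lt_of_ge zero_le) this, ?_⟩
  intro j
  have hbdd : BddAbove (E j ∩ Set.Iio b) := ⟨b, fun x hx => hx.2.le⟩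
  refine le_antisymm (csSup_le' fun x hx => hx.2.le) ?_
  have : ∀ n, seq n ≤ sSup (E j ∩ Set.Iio b) := by
    intro n
    have h1 : p j (seq n) ∈ E j := (hp j _ (hseqlt n)).1
    have h2 : seq n < p j (seq n) := (hp j _ (hseqlt n)).2
    have h3 : p j (seq n) ≤ seq (n + 1) := by
      rw [hseqS]; exact Ordinal.le_iSup (fun j => p j (seq n)) j
    have h4 : p j (seq n) < b := lt_of_le_of_lt h3 (hslt (n + 1))
    exact le_trans (le_of_lt h2) (le_csSup hbdd ⟨h1, h4⟩)
  calc b = ⨆ n, seq n := hb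
    _ ≤ sSup (E j ∩ Set.Iio b) := csSup_le' (by rintro x ⟨n, rfl⟩; exact this n)

lemma isClubIn_iInter {lam : Cardinal.{0}} (hlam : lam.IsRegular) (hω : ℵ₀ < lam)
    {ι : Type} [Nonempty ι] {E : ι → Set Ordinal}
    (hE : ∀ j, IsClubIn (E j) lam.ord) (hι : #ι < lam) :
    IsClubIn (⋂ j, E j) lam.ord := by
  refine ⟨?_, ?_, ?_⟩
  · obtain ⟨j⟩ := ‹Nonempty ι›
    exact (Set.iInter_subset E j).trans (hE j).1
  · intro a ha
    obtain ⟨b, hab, hblt, hb0, hsup⟩ := exists_acc_above hlam hω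
      (fun j => (hE j).1) (fun j => (hE j).2.1) hι ha
    exact ⟨b, Set.mem_iInter.2 fun j => (hE j).2.2 b hblt hb0 (hsup j), hab⟩
  · intro a ha h0 hsup
    have hne : (⋂ j, E j) ∩ Set.Iio a ≠ ∅ := by
      intro h; rw [h, csSup_empty] at hsup; exact h0 hsup.symm
    refine Set.mem_iInter.2 fun j => (hE j).2.2 a ha h0 (le_antisymm (csSup_le' fun x hx => hx.2.le) ?_)
    calc a = sSup ((⋂ j, E j) ∩ Set.Iio a) := hsup.symm
      _ ≤ sSup (E j ∩ Set.Iio a) := csSup_le_csSup ⟨a, fun x hx => hx.2.le⟩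
          (Set.nonempty_iff_ne_empty.2 hne)
          (fun x hx => ⟨Set.mem_iInter.1 hx.1 j, hx.2⟩)

lemma isClubIn_inter {lam : Cardinal.{0}} (hlam : lam.IsRegular) (hω : ℵ₀ < lam)
    {A B : Set Ordinal} (hA : IsClubIn A lam.ord) (hB : IsClubIn B lam.ord) :
    IsClubIn (A ∩ B) lam.ord := by
  have : A ∩ B = ⋂ b : Bool, (bif b then A else B) := by
    ext x; simp [Bool.forall_bool, and_comm]
  rw [this]
  refine isClubIn_iInter hlam hω (fun b => by cases b <;> simpa) ?_
  calc #Bool < ℵ₀ := Cardinal.lt_aleph0_of_finite Bool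
    _ < lam := hω

def accSet (lam : Cardinal.{0}) (E : Set Ordinal) : Set Ordinal :=
  {a | a < lam.ord ∧ a ≠ 0 ∧ sSup (E ∩ Set.Iio a) = a}

lemma accSet_subset {lam : Cardinal.{0}} {E : Set Ordinal} (hE : IsClubIn E lam.ord) :
    accSet lam E ⊆ E := fun a ha => hE.2.2 a ha.1 ha.2.1 ha.2.2

lemma isClubIn_accSet {lam : Cardinal.{0}} (hlam : lam.IsRegular) (hω : ℵ₀ < lam)
    {E : Set Ordinal} (hE : IsClubIn E lam.ord) :
    IsClubIn (accSet lam E) lam.ord := by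
  refine ⟨fun a ha => ha.1, ?_, ?_⟩
  · intro a ha
    obtain ⟨b, hab, hblt, hb0, hsup⟩ := exists_acc_above hlam hω (ι := Unit)
      (fun _ => hE.1) (fun _ => hE.2.1) (by calc #Unit < ℵ₀ := Cardinal.lt_aleph0_of_finite Unit
        _ < lam := hω) ha
    exact ⟨b, ⟨hblt, hb0, hsup ()⟩, hab⟩
  · intro a ha h0 hsup
    refine ⟨ha, h0, le_antisymm (csSup_le' fun x hx => hx.2.le) ?_⟩
    have hbdd : BddAbove (E ∩ Set.Iio a) := ⟨a, fun x hx => hx.2.le⟩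
    conv_lhs => rw [← hsup]
    refine csSup_le' ?_
    rintro x ⟨hxacc, hxa⟩
    -- x is an accumulation point below a; find points of E above any c < x... we need x ≤ sSup (E ∩ Iio a)
    have h1 : sSup (E ∩ Set.Iio x) = x := hxacc.2.2
    have h2 : E ∩ Set.Iio x ⊆ E ∩ Set.Iio a := fun y hy => ⟨hy.1, Set.mem_Iio.2 (lt_trans (Set.mem_Iio.1 hy.2) (Set.mem_Iio.1 hxa))⟩
    have hne : (E ∩ Set.Iio x).Nonempty := by
      rw [Set.nonempty_iff_ne_empty]
      intro h; rw [h, csSup_empty] at h1; exact hxacc.2.1 h1.symm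
    calc x = sSup (E ∩ Set.Iio x) := h1.symm
      _ ≤ sSup (E ∩ Set.Iio a) := csSup_le_csSup hbdd hne h2

lemma setOtp_eq_lift {o : Ordinal.{0}} {A : Set Ordinal.{0}} (e : Set.Iio o ≃o A) :
    setOtp A = Ordinal.lift.{1} o := by
  haveI hwo : IsWellOrder o.ToType (· < ·) := @isWellOrder_lt o.ToType _ _
  have e2 : o.ToType ≃o A := (Ordinal.ToType.mk (o := o)).symm.trans e
  have hne : Nonempty (((· < ·) : o.ToType → o.ToType → Prop) ≃r ((· < ·) : A → A → Prop)) :=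
    ⟨RelIso.mk e2.toEquiv (fun {a b} => e2.lt_iff_lt)⟩
  have h := (@Ordinal.lift_type_eq.{0, 1, 0} o.ToType A _ _ hwo _).2 hne
  rw [Ordinal.type_toType, Ordinal.lift_id'] at h
  rw [setOtp, ← h]

lemma exists_club_otp {κ : Cardinal.{0}} (hκ : ℵ₀ ≤ κ) {α : Ordinal.{0}} (hcof : α.cof = κ) :
    ∃ c : Set Ordinal, IsClubIn c α ∧ setOtp c = Ordinal.lift.{1} κ.ord := by
  have holim : Order.IsSuccLimit κ.ord := Cardinal.isSuccLimit_ord hκ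
  have hαlim : Order.IsSuccLimit α := Ordinal.aleph0_le_cof.1 (hcof ▸ hκ)
  obtain ⟨f', hf'lt, hf'mono, hf'cof⟩ : ∃ f' : Ordinal → Ordinal,
      (∀ j < κ.ord, f' j < α) ∧ (∀ i j, i < j → j < κ.ord → f' i < f' j) ∧
      (∀ c < α, ∃ j < κ.ord, c ≤ f' j) := by
    rw [← hcof]
    obtain ⟨f, hf⟩ := Ordinal.exists_fundamental_sequence α
    refine ⟨fun j => if h : j < α.cof.ord then f j h else 0, ?_, ?_, ?_⟩
    · intro j hj
      simp only [dif_pos hj]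
      exact hf.2.2 ▸ Ordinal.lt_blsub f j hj
    · intro i j hij hj
      simp only [dif_pos hj, dif_pos (hij.trans hj)]
      exact hf.2.1 _ _ hij
    · intro c hc
      by_contra hcon
      push_neg at hcon
      have hble : Ordinal.blsub α.cof.ord f ≤ c := by
        refine Ordinal.blsub_le_iff.2 fun j hj => ?_
        have := hcon j hj
        simpa only [dif_pos hj] using this
      rw [hf.2.2] at hble
      exact absurd hble (not_le.2 hc)
  set o : Ordinal := κ.ord with ho
  set h : Ordinal → Ordinal := fun b => sSup ((fun j => f' j + 1) '' Set.Iio b) with hh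
  have hbddgen : ∀ b ≤ o, BddAbove ((fun j => f' j + 1) '' Set.Iio b) := by
    intro b hb
    refine ⟨α, ?_⟩
    rintro x ⟨j, hj, rfl⟩
    have h1 : f' j < α := hf'lt j (lt_of_lt_of_le hj hb)
    simpa only [Ordinal.add_one_eq_succ, Order.succ_le_iff] using h1
  have hub : ∀ b < o, h b ≤ f' b := by
    intro b hb
    refine csSup_le' ?_
    rintro x ⟨j, hj, rfl⟩
    simpa only [Ordinal.add_one_eq_succ, Order.succ_le_iff] using hf'mono j b hj hb
  have hlt : ∀ b < o, h b < α := fun b hb => lt_of_le_of_lt (hub b hb) (hf'lt b hb)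
  have hstrict : ∀ b b', b < b' → b' ≤ o → h b < h b' := by
    intro b b' hbb' hb'
    have h1 : h b ≤ f' b := hub b (lt_of_lt_of_le hbb' hb')
    have h2 : f' b + 1 ≤ h b' := le_csSup (hbddgen b' hb') ⟨b, hbb', rfl⟩
    calc h b ≤ f' b := h1
      _ < f' b + 1 := lt_add_one _
      _ ≤ h b' := h2
  have hmono : ∀ b b', b ≤ b' → b' ≤ o → h b ≤ h b' := by
    intro b b' hbb' hb'
    rcases eq_or_lt_of_le hbb' with rfl | hlt'
    · exact le_rfl
    · exact (hstrict _ _ hlt' hb').le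
  have hcof2 : ∀ c < α, ∃ b < o, c < h b := by
    intro c hc
    obtain ⟨j, hj, hcj⟩ := hf'cof c hc
    refine ⟨j + 1, holim.succ_lt hj, ?_⟩
    have h2 : f' j + 1 ≤ h (j + 1) :=
      le_csSup (hbddgen _ (holim.succ_lt hj).le) ⟨j, lt_add_one j, rfl⟩
    calc c ≤ f' j := hcj
      _ < f' j + 1 := lt_add_one _
      _ ≤ h (j + 1) := h2
  set e : Set Ordinal := h '' Set.Iio o with he
  have hclub : IsClubIn e α := by
    refine ⟨?_, ?_, ?_⟩
    · rintro x ⟨b, hb, rfl⟩; exact hlt b hb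
    · intro a ha
      obtain ⟨b, hb, hab⟩ := hcof2 a ha
      exact ⟨h b, ⟨b, hb, rfl⟩, hab⟩
    · intro a ha h0 hsup
      set T : Set Ordinal := {b | b < o ∧ h b < a} with hT
      have himg : e ∩ Set.Iio a = h '' T := by
        ext x
        constructor
        · rintro ⟨⟨b, hb, rfl⟩, hxa⟩; exact ⟨b, ⟨hb, hxa⟩, rfl⟩
        · rintro ⟨b, ⟨hb, hba⟩, rfl⟩; exact ⟨⟨b, hb, rfl⟩, hba⟩
      have hTne : T.Nonempty := by
        rcases Set.eq_empty_or_nonempty T with hemp | hne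
        · exfalso
          rw [himg, hemp, Set.image_empty, csSup_empty] at hsup
          exact h0 hsup.symm
        · exact hne
      obtain ⟨b₀, hb₀, hab₀⟩ := hcof2 a ha
      have hTbd : ∀ b ∈ T, b < b₀ := by
        intro b hb
        by_contra hcon
        push_neg at hcon
        have hmm : h b₀ ≤ h b := hmono _ _ hcon hb.1.le
        exact absurd (lt_of_lt_of_le hab₀ hmm) (not_lt.2 hb.2.le)
      set bs : Ordinal := sSup T with hbs
      have hbslt : bs < o := lt_of_le_of_lt (csSup_le' fun b hb => (hTbd b hb).le) hb₀
      have hbsnotmem : bs ∉ T := by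
        intro hmem
        have hle : sSup (h '' T) ≤ h bs := by
          refine csSup_le' ?_
          rintro x ⟨b, hb, rfl⟩
          exact hmono _ _ (le_csSup ⟨b₀, fun y hy => (hTbd y hy).le⟩ hb) hbslt.le
        rw [← himg, hsup] at hle
        exact absurd (lt_of_le_of_lt hle hmem.2) (lt_irrefl a)
      have hge : a ≤ h bs := by
        by_contra hcon
        push_neg at hcon
        exact hbsnotmem ⟨hbslt, hcon⟩
      have hle : h bs ≤ a := by
        refine csSup_le' ?_
        rintro x ⟨j, hj, rfl⟩
        obtain ⟨b, hbT, hjb⟩ : ∃ b ∈ T, j < b := by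
          by_contra hcon
          push_neg at hcon
          have hcon2 : bs ≤ j := csSup_le' fun b hb => (hcon b hb)
          exact absurd (lt_of_lt_of_le hj hcon2) (lt_irrefl j)
        have h1 : f' j + 1 ≤ h b := le_csSup (hbddgen b hbT.1.le) ⟨j, hjb, rfl⟩
        exact h1.trans hbT.2.le
      exact ⟨bs, hbslt, le_antisymm hle hge⟩
  have hotp : setOtp e = Ordinal.lift.{1} o := by
    have hinj : ∀ x : Set.Iio o, h x.1 ∈ e := fun x => ⟨x.1, x.2, rfl⟩
    set H : Set.Iio o → e := fun x => ⟨h x.1, hinj x⟩ with hH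
    have hHmono : StrictMono H := by
      intro x y hxy
      exact hstrict _ _ (show x.1 < y.1 from hxy) y.2.le
    have hHsurj : Function.Surjective H := by
      rintro ⟨x, b, hb, rfl⟩
      exact ⟨⟨b, hb⟩, rfl⟩
    exact setOtp_eq_lift (StrictMono.orderIsoOfSurjective H hHmono hHsurj)
  exact ⟨e, hclub, hotp⟩

noncomputable def supIn (E : Set Ordinal) (ξ : Ordinal) : Ordinal := sSup (E ∩ Set.Iic ξ)

def ccSet (E eA : Set Ordinal) : Set Ordinal :=
  supIn E '' (eA ∩ {ξ | (E ∩ Set.Iic ξ).Nonempty})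

lemma supIn_le {E : Set Ordinal} {ξ : Ordinal} : supIn E ξ ≤ ξ :=
  csSup_le' fun _ hx => hx.2

lemma le_supIn {E : Set Ordinal} {x ξ : Ordinal} (hx : x ∈ E) (hxξ : x ≤ ξ) :
    x ≤ supIn E ξ :=
  le_csSup ⟨ξ, fun _ hy => hy.2⟩ ⟨hx, hxξ⟩

lemma supIn_mem {E : Set Ordinal} {l : Ordinal} (hE : IsClubIn E l) {ξ : Ordinal}
    (hξ : ξ < l) (hne : (E ∩ Set.Iic ξ).Nonempty) : supIn E ξ ∈ E :=
  sSup_mem_of_club hE (fun _ hx => hx.1) hne (lt_of_le_of_lt supIn_le hξ)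

lemma supIn_mono {E : Set Ordinal} {ξ ξ' : Ordinal} (h : ξ ≤ ξ') :
    supIn E ξ ≤ supIn E ξ' :=
  csSup_le' fun _ hx => le_supIn hx.1 (hx.2.trans h)

lemma supIn_anti {E E' : Set Ordinal} {ξ : Ordinal} (h : E' ⊆ E) :
    supIn E' ξ ≤ supIn E ξ :=
  csSup_le' fun _ hx => le_supIn (h hx.1) hx.2

lemma ccSet_good {κ lam : Cardinal.{0}} (hκ : κ.IsRegular) (hκlam : κ < lam)
    {α : Ordinal.{0}} (hα : α < lam.ord) (hcof : α.cof = κ)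
    {eA : Set Ordinal} (heA : IsClubIn eA α) (heotp : setOtp eA = Ordinal.lift.{1} κ.ord)
    {E : Set Ordinal} (hE : IsClubIn E lam.ord) (hsupE : sSup (E ∩ Set.Iio α) = α) :
    IsClubIn (ccSet E eA) α ∧ setOtp (ccSet E eA) = Ordinal.lift.{1} κ.ord := by
  have hαlim : Order.IsSuccLimit α := Ordinal.aleph0_le_cof.1 (hcof ▸ hκ.aleph0_le)
  have hα0 : α ≠ 0 := hαlim.pos.ne'
  set B : Set Ordinal := eA ∩ {ξ | (E ∩ Set.Iic ξ).Nonempty} with hB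
  -- points of E below α above any c
  have hEunb : ∀ c < α, ∃ η ∈ E, c < η ∧ η < α := by
    intro c hc
    by_contra hcon
    push_neg at hcon
    have hle : sSup (E ∩ Set.Iio α) ≤ c := by
      refine csSup_le' ?_
      rintro x ⟨hxE, hxα⟩
      by_contra hcx
      push_neg at hcx
      exact absurd (Set.mem_Iio.1 hxα) (not_lt.2 (hcon x hxE hcx))
    rw [hsupE] at hle
    exact absurd hle (not_le.2 hc)
  -- B is club in α
  have hBclub : IsClubIn B α := by
    refine ⟨fun x hx => heA.1 hx.1, ?_, ?_⟩
    · intro c hc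
      obtain ⟨η, hηE, hcη, hηα⟩ := hEunb c hc
      obtain ⟨ξ, hξeA, hηξ⟩ := heA.2.1 η hηα
      exact ⟨ξ, ⟨hξeA, ⟨η, hηE, hηξ.le⟩⟩, lt_of_lt_of_le hcη hηξ.le⟩
    · intro a ha h0 hsup
      have hne : (B ∩ Set.Iio a).Nonempty := by
        rw [Set.nonempty_iff_ne_empty]
        intro h; rw [h, csSup_empty] at hsup; exact h0 hsup.symm
      have h1 : a ∈ eA := by
        refine heA.2.2 a ha h0 (le_antisymm (csSup_le' fun x hx => le_of_lt (Set.mem_Iio.1 hx.2)) ?_)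
        conv_lhs => rw [← hsup]
        exact csSup_le_csSup ⟨a, fun x hx => le_of_lt (Set.mem_Iio.1 hx.2)⟩ hne
          fun x hx => ⟨hx.1.1, hx.2⟩
      obtain ⟨b, hbB, hba⟩ := hne
      obtain ⟨η, hηE, hηb⟩ := hbB.2
      exact ⟨h1, ⟨η, hηE, Set.mem_Iic.2 ((Set.mem_Iic.1 hηb).trans (le_of_lt (Set.mem_Iio.1 hba)))⟩⟩
  have hCCsub : ∀ x ∈ ccSet E eA, x < α := by
    rintro x ⟨ξ, hξB, rfl⟩
    exact lt_of_le_of_lt supIn_le (Set.mem_Iio.1 (heA.1 hξB.1))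
  have hCCunb : ∀ c < α, ∃ b ∈ ccSet E eA, c < b := by
    intro c hc
    obtain ⟨η, hηE, hcη, hηα⟩ := hEunb c hc
    obtain ⟨ξ, hξB, hηξ⟩ := hBclub.2.1 η hηα
    exact ⟨supIn E ξ, ⟨ξ, hξB, rfl⟩, lt_of_lt_of_le hcη (le_supIn hηE (le_of_lt hηξ))⟩
  have hclub : IsClubIn (ccSet E eA) α := by
    refine ⟨fun x hx => Set.mem_Iio.2 (hCCsub x hx), hCCunb, ?_⟩
    intro a ha h0 hsup
    have hne : (ccSet E eA ∩ Set.Iio a).Nonempty := by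
      rw [Set.nonempty_iff_ne_empty]
      intro h; rw [h, csSup_empty] at hsup; exact h0 hsup.symm
    have hCCsubE : ccSet E eA ∩ Set.Iio a ⊆ E := by
      rintro x ⟨⟨ξ, hξB, rfl⟩, _⟩
      exact supIn_mem hE (lt_trans (Set.mem_Iio.1 (heA.1 hξB.1)) hα) hξB.2
    have haE : a ∈ E := by
      have hmem := sSup_mem_of_club hE hCCsubE hne
        (by rw [hsup]; exact lt_trans ha hα)
      rwa [hsup] at hmem
    have hfa : supIn E a = a := le_antisymm supIn_le (le_supIn haE le_rfl)
    set T : Set Ordinal := B ∩ {ξ | supIn E ξ < a} with hT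
    have himg : ccSet E eA ∩ Set.Iio a = supIn E '' T := by
      ext x
      constructor
      · rintro ⟨⟨ξ, hξB, rfl⟩, hxa⟩
        exact ⟨ξ, ⟨hξB, Set.mem_Iio.1 hxa⟩, rfl⟩
      · rintro ⟨ξ, ⟨hξB, hξa⟩, rfl⟩
        exact ⟨⟨ξ, hξB, rfl⟩, Set.mem_Iio.2 hξa⟩
    have hTne : T.Nonempty := by
      obtain ⟨x, hx⟩ := hne
      rw [himg] at hx
      obtain ⟨ξ, hξT, _⟩ := hx
      exact ⟨ξ, hξT⟩
    have hTa : ∀ ξ ∈ T, ξ < a := by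
      intro ξ hξ
      by_contra hcon
      push_neg at hcon
      have hge : a ≤ supIn E ξ := hfa ▸ supIn_mono hcon
      exact absurd (lt_of_le_of_lt hge hξ.2) (lt_irrefl a)
    set ξs : Ordinal := sSup T with hξs
    have hbddT : BddAbove T := ⟨a, fun ξ hξ => (hTa ξ hξ).le⟩
    have hξsa : ξs ≤ a := csSup_le' fun ξ hξ => (hTa ξ hξ).le
    have hξsα : ξs < α := lt_of_le_of_lt hξsa ha
    have hξsnot : ξs ∉ T := by
      intro hmem
      have hle : sSup (supIn E '' T) ≤ supIn E ξs := by
        refine csSup_le' ?_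
        rintro x ⟨ξ, hξT, rfl⟩
        exact supIn_mono (le_csSup hbddT hξT)
      rw [← himg, hsup] at hle
      exact absurd (lt_of_le_of_lt hle hmem.2) (lt_irrefl a)
    have hξs0 : ξs ≠ 0 := by
      intro h0'
      obtain ⟨ξ, hξT⟩ := hTne
      have : ξ ≤ ξs := le_csSup hbddT hξT
      rw [h0', nonpos_iff_eq_zero] at this
      exact hξsnot (h0' ▸ this ▸ hξT)
    have hξsB : ξs ∈ B := by
      refine hBclub.2.2 ξs hξsα hξs0 (le_antisymm (csSup_le'
        fun x hx => le_of_lt (Set.mem_Iio.1 hx.2)) ?_)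
      have hsub : T ⊆ B ∩ Set.Iio ξs := by
        intro ξ hξ
        refine ⟨hξ.1, Set.mem_Iio.2 (lt_of_le_of_ne (le_csSup hbddT hξ) ?_)⟩
        intro heq; exact hξsnot (heq ▸ hξ)
      calc ξs = sSup T := hξs
        _ ≤ sSup (B ∩ Set.Iio ξs) :=
          csSup_le_csSup ⟨ξs, fun x hx => le_of_lt (Set.mem_Iio.1 hx.2)⟩ hTne hsub
    have hfin : supIn E ξs = a := by
      refine le_antisymm (supIn_le.trans hξsa) ?_
      have h1 : sSup (supIn E '' T) ≤ supIn E ξs := by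
        refine csSup_le' ?_
        rintro x ⟨ξ, hξT, rfl⟩
        exact supIn_mono (le_csSup hbddT hξT)
      rw [← himg, hsup] at h1
      exact h1
    exact ⟨ξs, hξsB, hfin⟩
  refine ⟨hclub, ?_⟩
  -- upper bound for the order type
  have hCCne : ∀ x : ccSet E eA, ∃ ξ, ξ ∈ B ∧ supIn E ξ = x.1 := by
    rintro ⟨x, ξ, hξ, hx⟩
    exact ⟨ξ, hξ, hx⟩
  classical
  set j : ccSet E eA → Ordinal := fun x => sInf {ξ | ξ ∈ B ∧ supIn E ξ = x.1} with hj
  have hjspec : ∀ x : ccSet E eA, j x ∈ B ∧ supIn E (j x) = x.1 := fun x =>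
    csInf_mem (hCCne x)
  have hjmono : ∀ x y : ccSet E eA, x.1 < y.1 → j x < j y := by
    intro x y hxy
    by_contra hcon
    push_neg at hcon
    have : y.1 ≤ x.1 := by
      rw [← (hjspec x).2, ← (hjspec y).2]
      exact supIn_mono hcon
    exact absurd (lt_of_lt_of_le hxy this) (lt_irrefl _)
  set F : ccSet E eA → eA := fun x => ⟨j x, (hjspec x).1.1⟩ with hF
  have hFmono : StrictMono F := fun x y hxy => hjmono x y hxy
  have hemb : Nonempty (((· < ·) : ccSet E eA → ccSet E eA → Prop) ↪r
      ((· < ·) : eA → eA → Prop)) :=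
    ⟨⟨⟨F, hFmono.injective⟩, fun {a b} => hFmono.lt_iff_lt⟩⟩
  have hle : setOtp (ccSet E eA) ≤ setOtp eA := Ordinal.type_le_iff'.2 hemb
  rw [heotp] at hle
  -- lower bound via cofinality
  have hge : Ordinal.lift.{1} κ.ord ≤ setOtp (ccSet E eA) := by
    set iso := Ordinal.ToType.mk (o := α) with hiso
    set ι : Type := {t : α.ToType // ((iso.symm t : Set.Iio α) : Ordinal) ∈ ccSet E eA} with hι
    set g : ι → Ordinal := fun t => ((iso.symm t.1 : Set.Iio α) : Ordinal) with hg
    have hbddg : BddAbove (Set.range g) := Ordinal.bddAbove_range g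
    have hglt : ∀ t, g t < α := fun t => (iso.symm t.1).2
    have hgsup : ⨆ t, g t = α := by
      refine le_antisymm (csSup_le' ?_) ?_
      · rintro x ⟨t, rfl⟩; exact (hglt t).le
      · by_contra hcon
        push_neg at hcon
        obtain ⟨x, hxCC, hx⟩ := hCCunb _ hcon
        have hxα : x < α := hCCsub x hxCC
        have hmem : ((iso.symm (iso ⟨x, hxα⟩) : Set.Iio α) : Ordinal) ∈ ccSet E eA := by
          rw [OrderIso.symm_apply_apply]; exact hxCC
        have : g ⟨iso ⟨x, hxα⟩, hmem⟩ ≤ ⨆ t, g t := le_ciSup hbddg _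
        rw [hg] at this
        simp only [OrderIso.symm_apply_apply] at this
        exact absurd (lt_of_lt_of_le hx this) (lt_irrefl _)
    have hκι : κ ≤ #ι := by
      have h1 : Ordinal.cof (⨆ t, g t) ≤ #ι := Ordinal.cof_iSup_le (by
        intro t; rw [hgsup]; exact hglt t)
      rwa [hgsup, hcof] at h1
    have hequiv : ccSet E eA ≃ ι :=
      { toFun := fun x => ⟨iso ⟨x.1, hCCsub x.1 x.2⟩, by
          rw [OrderIso.symm_apply_apply]; exact x.2⟩
        invFun := fun t => ⟨((iso.symm t.1 : Set.Iio α) : Ordinal), t.2⟩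
        left_inv := fun x => Subtype.ext (by simp)
        right_inv := fun t => Subtype.ext (by exact iso.apply_symm_apply t.1) }
    have hmkCC : #(ccSet E eA) = Cardinal.lift.{1} #ι := by
      have h2 := Cardinal.lift_mk_eq'.{1, 0}.2 ⟨hequiv⟩
      rwa [Cardinal.lift_uzero] at h2
    have hordle : (Cardinal.lift.{1} κ).ord ≤ setOtp (ccSet E eA) := by
      rw [Cardinal.ord_le, setOtp, Ordinal.card_type, hmkCC]
      exact Cardinal.lift_le.2 hκι
    rw [← Cardinal.lift_ord] at hordle
    exact hordle
  exact le_antisymm hle hge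

end Aux
section Main
open Set

/-- (Shelah) If `κ < λ` are regular cardinals with `κ⁺ < λ` and `S ⊆ S^λ_κ` is stationary
in `λ`, then there is a club-guessing sequence on `S`: a sequence `⟨C_α : α ∈ S⟩` with each
`C_α` a club in `α` of order type `κ`, such that for every club `D ⊆ λ` the set of `α ∈ S`
with `C_α ⊆ D` is stationary in `λ`. -/
theorem exists_club_guessing (κ lam : Cardinal.{0}) (hκ : κ.IsRegular)
    (hlam : lam.IsRegular) (hlt : κ < lam) (hsucc : Order.succ κ < lam)
    (S : Set Ordinal) (hS : S ⊆ {α : Ordinal | α < lam.ord ∧ α.cof = κ})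
    (hstat : IsStationaryIn S lam.ord) :
    ∃ C : Ordinal → Set Ordinal,
      (∀ α ∈ S, IsClubIn (C α) α ∧ setOtp (C α) = Ordinal.lift.{1} κ.ord) ∧
      ∀ D : Set Ordinal, IsClubIn D lam.ord →
        IsStationaryIn {α ∈ S | C α ⊆ D} lam.ord := by
  classical
  have hκ0 : ℵ₀ ≤ κ := hκ.aleph0_le
  have hwl : ℵ₀ < lam := lt_of_le_of_lt hκ0 hlt
  -- choose a club of order type κ.ord in each point of S
  have hech : ∀ α : Ordinal, ∃ c : Set Ordinal,
      α ∈ S → IsClubIn c α ∧ setOtp c = Ordinal.lift.{1} κ.ord := by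
    intro α
    by_cases hα : α ∈ S
    · obtain ⟨c, h1, h2⟩ := exists_club_otp hκ0 (hS hα).2
      exact ⟨c, fun _ => ⟨h1, h2⟩⟩
    · exact ⟨∅, fun h => absurd h hα⟩
  choose e he using hech
  -- the candidate club-guessing sequences
  set Cand : Set Ordinal → Ordinal → Set Ordinal := fun E α =>
    if sSup (E ∩ Set.Iio α) = α then ccSet E (e α) else e α with hCand
  have hCand1 : ∀ E, IsClubIn E lam.ord → ∀ α ∈ S,
      IsClubIn (Cand E α) α ∧ setOtp (Cand E α) = Ordinal.lift.{1} κ.ord := by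
    intro E hE α hα
    by_cases hsup : sSup (E ∩ Set.Iio α) = α
    · have hgood := ccSet_good hκ hlt (hS hα).1 (hS hα).2 (he α hα).1 (he α hα).2 hE hsup
      rw [hCand]
      simpa only [if_pos hsup] using hgood
    · rw [hCand]
      simpa only [if_neg hsup] using he α hα
  -- main claim: some club E works
  have main : ∃ E, IsClubIn E lam.ord ∧ ∀ D, IsClubIn D lam.ord →
      IsStationaryIn {α ∈ S | Cand E α ⊆ D} lam.ord := by
    by_contra hmain
    push_neg at hmain
    have hmain' : ∀ E : Set Ordinal, ∃ DF : Set Ordinal × Set Ordinal,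
        IsClubIn E lam.ord → IsClubIn DF.1 lam.ord ∧ IsClubIn DF.2 lam.ord ∧
        ∀ β, β ∈ S → β ∈ DF.2 → ¬ Cand E β ⊆ DF.1 := by
      intro E
      by_cases hE : IsClubIn E lam.ord
      · obtain ⟨D, hD, hns⟩ := hmain E hE
        rw [IsStationaryIn] at hns
        push_neg at hns
        obtain ⟨F, hF, hempty⟩ := hns
        refine ⟨⟨D, F⟩, fun _ => ⟨hD, hF, ?_⟩⟩
        intro β hβS hβF hsub
        have hmem : β ∈ {α ∈ S | Cand E α ⊆ D} ∩ F := ⟨⟨hβS, hsub⟩, hβF⟩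
        rw [hempty] at hmem
        exact hmem
      · exact ⟨⟨∅, ∅⟩, fun h => absurd h hE⟩
    choose DF hDF using hmain'
    set step : Set Ordinal → Set Ordinal := fun E => (E ∩ (DF E).1) ∩ (DF E).2 with hstepdef
    have hstep_sub : ∀ E, step E ⊆ E := fun E x hx => hx.1.1
    have hstep_club : ∀ E, IsClubIn E lam.ord → IsClubIn (step E) lam.ord := fun E hE =>
      isClubIn_inter hlam hwl (isClubIn_inter hlam hwl hE (hDF E hE).1) (hDF E hE).2.1
    -- the decreasing chain of clubs
    obtain ⟨G, hG⟩ : ∃ G : Ordinal → Set Ordinal,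
        ∀ i, G i = Set.Iio lam.ord ∩ ⋂ j : Set.Iio i, step (G j.1) :=
      ⟨_, fun i => WellFounded.fix_eq Ordinal.lt_wf
        (fun i IH => Set.Iio lam.ord ∩ ⋂ j : Set.Iio i, step (IH j.1 j.2)) i⟩
    have hGsub : ∀ j i, j < i → G i ⊆ step (G j) := by
      intro j i hji x hx
      rw [hG i] at hx
      exact Set.mem_iInter.1 hx.2 ⟨j, hji⟩
    have hGmono : ∀ j i, j ≤ i → G i ⊆ G j := by
      intro j i hji
      rcases eq_or_lt_of_le hji with rfl | h
      · exact subset_rfl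
      · exact (hGsub j i h).trans (hstep_sub _)
    set ok : Ordinal := (Order.succ κ).ord with hok
    have hsk0 : ℵ₀ ≤ Order.succ κ := hκ0.trans (Order.le_succ κ)
    have hoklim : Order.IsSuccLimit ok := Cardinal.isSuccLimit_ord hsk0
    have hGclub : ∀ i, i ≤ ok → IsClubIn (G i) lam.ord := by
      intro i
      induction i using Ordinal.induction with
      | _ i IH =>
        intro hi
        set isoi := Ordinal.ToType.mk (o := i) with hisoi
        set Efam : Option i.ToType → Set Ordinal := fun t =>
          Option.rec (Set.Iio lam.ord)
            (fun t => step (G ((isoi.symm t : Set.Iio i) : Ordinal))) t with hEfam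
        have hfamclub : ∀ t, IsClubIn (Efam t) lam.ord := by
          rintro (_ | t)
          · exact isClubIn_Iio hlam.aleph0_le
          · refine hstep_club _ (IH _ (isoi.symm t).2
              (le_trans (le_of_lt (isoi.symm t).2) hi))
        have hcard : #(Option i.ToType) < lam := by
          rw [Cardinal.mk_option, Cardinal.mk_toType]
          have h1 : i.card ≤ Order.succ κ := by
            have h2 := Ordinal.card_le_card hi
            rwa [hok, Cardinal.card_ord] at h2
          calc i.card + 1 ≤ Order.succ κ + 1 := add_le_add_left h1 1
            _ = Order.succ κ := Cardinal.add_one_eq hsk0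
            _ < lam := hsucc
        have heq : Set.Iio lam.ord ∩ ⋂ j : Set.Iio i, step (G j.1) = ⋂ t, Efam t := by
          ext x
          constructor
          · rintro ⟨h1, h2⟩
            refine Set.mem_iInter.2 ?_
            rintro (_ | t)
            · exact h1
            · exact Set.mem_iInter.1 h2 (isoi.symm t)
          · intro h
            refine ⟨Set.mem_iInter.1 h none, Set.mem_iInter.2 fun j => ?_⟩
            have h3 := Set.mem_iInter.1 h (some (isoi j))
            have h4 : ((isoi.symm (isoi j) : Set.Iio i) : Ordinal) = j.1 := by
              rw [OrderIso.symm_apply_apply]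
            rw [hEfam] at h3
            simp only at h3
            rwa [h4] at h3
        rw [hG i, heq]
        exact isClubIn_iInter hlam hwl hfamclub hcard
    -- pick a point of S which is an accumulation point of the final club
    set Estar : Set Ordinal := G ok with hEstar
    have hEstarclub : IsClubIn Estar lam.ord := hGclub ok le_rfl
    obtain ⟨α, hαS, hαacc⟩ := hstat _ (isClubIn_accSet hlam hwl hEstarclub)
    have hαlt : α < lam.ord := (hS hαS).1
    have hαcof : α.cof = κ := (hS hαS).2
    have hαE : α ∈ Estar := accSet_subset hEstarclub hαacc
    have hsupGi : ∀ i, i ≤ ok → sSup (G i ∩ Set.Iio α) = α := by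
      intro i hi
      have h1 : sSup (Estar ∩ Set.Iio α) = α := hαacc.2.2
      have hne : (Estar ∩ Set.Iio α).Nonempty := by
        rw [Set.nonempty_iff_ne_empty]
        intro h; rw [h, csSup_empty] at h1; exact hαacc.2.1 h1.symm
      refine le_antisymm (csSup_le' fun x hx => le_of_lt (Set.mem_Iio.1 hx.2)) ?_
      conv_lhs => rw [← h1]
      exact csSup_le_csSup ⟨α, fun x hx => le_of_lt (Set.mem_Iio.1 hx.2)⟩ hne
        (fun x hx => ⟨hGmono i ok hi hx.1, hx.2⟩)
    -- at every stage i < ok, some point ξ of `e α` witnesses a "drop"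
    have hevent : ∀ i : Ordinal, ∃ ξ, i < ok →
        ξ ∈ e α ∧ (supIn (G (i + 1)) ξ < supIn (G i) ξ ∨
          ((G i ∩ Set.Iic ξ).Nonempty ∧ ¬(G (i + 1) ∩ Set.Iic ξ).Nonempty)) := by
      intro i
      by_cases hi : i < ok
      · have hGi : IsClubIn (G i) lam.ord := hGclub i hi.le
        have hGi1 : IsClubIn (G (i + 1)) lam.ord := hGclub (i + 1) (hoklim.succ_lt hi).le
        have hCeq : Cand (G i) α = ccSet (G i) (e α) := by
          rw [hCand]; exact if_pos (hsupGi i hi.le)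
        have hαstep : α ∈ step (G i) := hGsub i ok hi hαE
        have hαF : α ∈ (DF (G i)).2 := hαstep.2
        have hnot := (hDF (G i) hGi).2.2 α hαS hαF
        rw [hCeq] at hnot
        obtain ⟨x, hxCC, hxD⟩ := Set.not_subset.1 hnot
        obtain ⟨ξ, hξB, hξx⟩ := hxCC
        have hξα : ξ < α := Set.mem_Iio.1 ((he α hαS).1.1 hξB.1)
        refine ⟨ξ, fun _ => ⟨hξB.1, ?_⟩⟩
        by_cases hne1 : (G (i + 1) ∩ Set.Iic ξ).Nonempty
        · left
          have hy : supIn (G (i + 1)) ξ ∈ G (i + 1) :=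
            supIn_mem hGi1 (lt_trans hξα hαlt) hne1
          have hyD : supIn (G (i + 1)) ξ ∈ (DF (G i)).1 :=
            (hGsub i (i + 1) (lt_add_one i) hy).1.2
          have hle : supIn (G (i + 1)) ξ ≤ supIn (G i) ξ :=
            supIn_anti (hGmono i (i + 1) (le_of_lt (lt_add_one i)))
          refine lt_of_le_of_ne hle ?_
          intro heq
          rw [heq, hξx] at hyD
          exact hxD hyD
        · right
          exact ⟨hξB.2, hne1⟩
      · exact ⟨0, fun h => absurd h hi⟩
    choose ξf hξf using hevent
    -- counting: each fiber is finite
    have hdec : ∀ ξ i j, i ≤ j → supIn (G j) ξ ≤ supIn (G i) ξ := fun ξ i j hij =>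
      supIn_anti (hGmono i j hij)
    have hfib : ∀ ξ : Ordinal, {i | i < ok ∧ ξf i = ξ}.Finite := by
      intro ξ
      have hA : {i | i < ok ∧ supIn (G (i + 1)) ξ < supIn (G i) ξ}.Finite := by
        refine finite_of_strictAnti_on (fun i => supIn (G i) ξ) ?_
        intro i hi j hj hij
        have hij1 : i + 1 ≤ j := by
          rw [Ordinal.add_one_eq_succ]; exact Order.succ_le_of_lt hij
        calc supIn (G j) ξ ≤ supIn (G (i + 1)) ξ := hdec ξ (i + 1) j hij1
          _ < supIn (G i) ξ := hi.2
      have hB : {i | i < ok ∧ (G i ∩ Set.Iic ξ).Nonempty ∧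
          ¬(G (i + 1) ∩ Set.Iic ξ).Nonempty}.Finite := by
        refine Set.Subsingleton.finite ?_
        intro i hi j hj
        by_contra hne
        rcases lt_or_gt_of_ne hne with h | h
        · have hij1 : i + 1 ≤ j := by
            rw [Ordinal.add_one_eq_succ]; exact Order.succ_le_of_lt h
          exact hi.2.2 (hj.2.1.mono (Set.inter_subset_inter_left _ (hGmono (i + 1) j hij1)))
        · have hij1 : j + 1 ≤ i := by
            rw [Ordinal.add_one_eq_succ]; exact Order.succ_le_of_lt h
          exact hj.2.2 (hi.2.1.mono (Set.inter_subset_inter_left _ (hGmono (j + 1) i hij1)))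
      refine Set.Finite.subset (hA.union hB) ?_
      rintro i ⟨hi, hξ⟩
      have hev := (hξf i hi).2
      rw [hξ] at hev
      rcases hev with h | h
      · exact Or.inl ⟨hi, h⟩
      · exact Or.inr ⟨hi, h⟩
    -- the union bound gives a contradiction with κ⁺ > κ
    have hcover : Set.Iio ok ⊆ ⋃ ξ : e α, {i | i < ok ∧ ξf i = (ξ : Ordinal)} := by
      intro i hi
      exact Set.mem_iUnion.2 ⟨⟨ξf i, (hξf i hi).1⟩, ⟨hi, rfl⟩⟩
    have hmk1 : #(Set.Iio ok) = Cardinal.lift.{1} (Order.succ κ) := by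
      rw [Ordinal.mk_Iio_ordinal, hok, Cardinal.card_ord]
    have hmk2 : #(e α) = Cardinal.lift.{1} κ := by
      have h1 := Ordinal.card_type ((· < ·) : e α → e α → Prop)
      rw [show Ordinal.type ((· < ·) : e α → e α → Prop) = setOtp (e α) from rfl,
        (he α hαS).2, ← Ordinal.lift_card, Cardinal.card_ord] at h1
      exact h1.symm
    have hbound : #(Set.Iio ok) ≤ #(e α) * ℵ₀ := by
      calc #(Set.Iio ok) ≤ #(⋃ ξ : e α, {i | i < ok ∧ ξf i = (ξ : Ordinal)}) :=
            Cardinal.mk_le_mk_of_subset hcover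
        _ ≤ #(e α) * ⨆ ξ : e α, #({i | i < ok ∧ ξf i = (ξ : Ordinal)}) :=
            Cardinal.mk_iUnion_le _
        _ ≤ #(e α) * ℵ₀ := mul_le_mul_right
            (ciSup_le' fun ξ => (hfib _).lt_aleph0.le) _
    have hℵlift : ℵ₀ ≤ Cardinal.lift.{1} κ := by
      rw [← Cardinal.lift_aleph0.{1, 0}]
      exact Cardinal.lift_le.2 hκ0
    rw [hmk1, hmk2, Cardinal.mul_eq_left hℵlift hℵlift
      Cardinal.aleph0_ne_zero] at hbound
    have hfinal : Order.succ κ ≤ κ := Cardinal.lift_le.1 hbound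
    exact absurd hfinal (not_le.2 (Order.lt_succ κ))
  obtain ⟨E, hE, hg⟩ := main
  exact ⟨Cand E, fun α hα => hCand1 E hE α hα, fun D hD => hg D hD⟩

end Main
end

section
/- Suppose κ < λ are regular cardinals, S ⊆ S^λ_κ is stationary in λ, and ⟨C_α : α ∈ S⟩ is a club-guessing sequence on S. Suppose moreover that μ < λ is a cardinal and S = ⋃_{η<μ} S_η. Then there is some η < μ such that ⟨C_α : α ∈ S_η⟩ is a club-guessing sequence on S_η. -/
open Cardinal

lemma clubInter (lam : Cardinal.{0}) (hlam : lam.IsRegular) (h0 : ℵ₀ < lam)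
    (o : Ordinal) (ho : o.card < lam) (f : Ordinal → Set Ordinal)
    (hf : ∀ η < o, IsClubIn (f η) lam.ord) :
    IsClubIn (Set.Iio lam.ord ∩ ⋂ η ∈ Set.Iio o, f η) lam.ord := by
  have hlim : Order.IsSuccLimit lam.ord := Cardinal.isSuccLimit_ord hlam.aleph0_le
  have hcof : lam.ord.cof = lam := hlam.cof_eq
  refine ⟨Set.inter_subset_left, ?_, ?_⟩
  · -- unbounded
    intro a ha
    have hnext : ∀ x : Ordinal, ∃ y : Ordinal, x < lam.ord →
        x < y ∧ y < lam.ord ∧ ∀ η, (hη : η < o) → ∃ z ∈ f η, x < z ∧ z ≤ y := by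
      intro x
      by_cases hx : x < lam.ord
      · have : ∀ η, ∃ z, η < o → z ∈ f η ∧ x < z := by
          intro η
          by_cases hη : η < o
          · obtain ⟨z, hz, hxz⟩ := (hf η hη).2.1 x hx
            exact ⟨z, fun _ => ⟨hz, hxz⟩⟩
          · exact ⟨0, fun h => absurd h hη⟩
        choose e he using this
        refine ⟨max (Order.succ x) (Ordinal.bsup o (fun η _ => e η)), fun _ => ?_⟩
        refine ⟨lt_max_iff.2 (Or.inl (Order.lt_succ x)), max_lt (hlim.succ_lt hx) ?_, ?_⟩
        · refine Ordinal.bsup_lt_ord (by rwa [hcof]) ?_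
          intro η hη
          exact ((hf η hη).1 (he η hη).1 : _)
        · intro η hη
          exact ⟨e η, (he η hη).1, (he η hη).2,
            le_max_of_le_right (Ordinal.le_bsup (fun η _ => e η) η hη)⟩
      · exact ⟨0, fun h => absurd h hx⟩
    choose g hg using hnext
    set s : ℕ → Ordinal := fun n => g^[n] a with hs
    have hstep : ∀ n, s (n + 1) = g (s n) := by
      intro n; simp [hs, Function.iterate_succ_apply']
    have hlt : ∀ n, s n < lam.ord := by
      intro n
      induction n with
      | zero => simpa [hs] using ha
      | succ n ih => rw [hstep]; exact (hg (s n) ih).2.1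
    have hmono : ∀ n, s n < s (n + 1) := by
      intro n; rw [hstep]; exact (hg (s n) (hlt n)).1
    set b : Ordinal := ⨆ n, s n with hb
    have hbdd : BddAbove (Set.range s) := Ordinal.bddAbove_range s
    have hsb : ∀ n, s n ≤ b := fun n => le_ciSup hbdd n
    have hblt : b < lam.ord := by
      refine Ordinal.iSup_lt_ord ?_ hlt
      rw [hcof, Cardinal.mk_nat]; exact h0
    have hab : a < b := lt_of_lt_of_le (by simpa [hs] using hmono 0) (hsb 1)
    have hbne : b ≠ 0 := fun h => absurd (h ▸ hab) (not_lt_zero' : ¬ a < 0)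
    refine ⟨b, ⟨hblt, ?_⟩, hab⟩
    refine Set.mem_iInter₂.2 fun η hη => ?_
    refine (hf η hη).2.2 b hblt hbne ?_
    have hsub : f η ∩ Set.Iio b ⊆ Set.Iio b := Set.inter_subset_right
    refine le_antisymm (csSup_le' fun x hx => le_of_lt hx.2) ?_
    rw [hb]
    refine ciSup_le fun n => ?_
    obtain ⟨z, hz, hxz, hzy⟩ := (hg (s n) (hlt n)).2.2 η hη
    have hzy' : z ≤ s (n + 1) := (hstep n) ▸ hzy
    have hzb : z < b := lt_of_le_of_lt hzy' (lt_of_lt_of_le (hmono (n + 1)) (hsb (n + 2)))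
    exact le_trans hxz.le (le_csSup ⟨b, fun x hx => hx.2.le⟩ ⟨hz, hzb⟩)
  · -- closed
    intro a ha hane hsup
    refine ⟨ha, Set.mem_iInter₂.2 fun η hη => ?_⟩
    refine (hf η hη).2.2 a ha hane ?_
    set X := (Set.Iio lam.ord ∩ ⋂ η ∈ Set.Iio o, f η) ∩ Set.Iio a with hX
    have hXne : X.Nonempty := by
      rw [Set.nonempty_iff_ne_empty]
      intro h
      rw [h, csSup_empty, Ordinal.bot_eq_zero] at hsup
      exact hane hsup.symm
    have hsubXY : X ⊆ f η ∩ Set.Iio a := fun x hx => ⟨Set.mem_iInter₂.1 hx.1.2 η hη, hx.2⟩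
    have h1 : sSup (f η ∩ Set.Iio a) ≤ a := csSup_le' fun x hx => hx.2.le
    have h2 : a ≤ sSup (f η ∩ Set.Iio a) :=
      le_trans hsup.ge (csSup_le_csSup ⟨a, fun x hx => hx.2.le⟩ hXne hsubXY)
    exact le_antisymm h1 h2

/-- If `⟨C_α : α ∈ S⟩` is a club-guessing sequence on a stationary `S ⊆ S^λ_κ`, and
`S = ⋃_{η < μ} S_η` with `μ < λ` a cardinal, then for some `η < μ`, `⟨C_α : α ∈ S_η⟩` is a
club-guessing sequence on `S_η`. -/
theorem club_guessing_decomposition (κ lam μ : Cardinal.{0}) (hκ : κ.IsRegular)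
    (hlam : lam.IsRegular) (hlt : κ < lam)
    (S : Set Ordinal) (hS : S ⊆ {α : Ordinal | α < lam.ord ∧ α.cof = κ})
    (hstat : IsStationaryIn S lam.ord)
    (C : Ordinal → Set Ordinal)
    (hC : ∀ α ∈ S, IsClubIn (C α) α ∧ setOtp (C α) = Ordinal.lift.{1} κ.ord)
    (hguess : ∀ D : Set Ordinal, IsClubIn D lam.ord →
      IsStationaryIn {α ∈ S | C α ⊆ D} lam.ord)
    (hμ : μ < lam) (T : Ordinal → Set Ordinal)
    (hT : S = ⋃ η ∈ Set.Iio μ.ord, T η) :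
    ∃ η < μ.ord, ∀ D : Set Ordinal, IsClubIn D lam.ord →
      IsStationaryIn {α ∈ T η | C α ⊆ D} lam.ord := by
  have h0 : ℵ₀ < lam := lt_of_le_of_lt hκ.aleph0_le hlt
  by_contra hcon
  push_neg at hcon
  have key : ∀ η, ∃ p : Set Ordinal × Set Ordinal, η < μ.ord →
      IsClubIn p.1 lam.ord ∧ IsClubIn p.2 lam.ord ∧
        {α ∈ T η | C α ⊆ p.1} ∩ p.2 = ∅ := by
    intro η
    by_cases hη : η < μ.ord
    · obtain ⟨D, hD, hns⟩ := hcon η hη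
      rw [IsStationaryIn] at hns
      push_neg at hns
      obtain ⟨E, hE, hne⟩ := hns
      exact ⟨(D, E), fun _ => ⟨hD, hE, hne⟩⟩
    · exact ⟨(∅, ∅), fun h => absurd h hη⟩
  choose p hp using key
  set o : Ordinal := μ.ord + μ.ord with ho
  set f : Ordinal → Set Ordinal :=
    fun η => if η < μ.ord then (p η).1 else (p (η - μ.ord)).2 with hf
  have hfc : ∀ η < o, IsClubIn (f η) lam.ord := by
    intro η hηo
    simp only [hf]
    by_cases hη : η < μ.ord
    · rw [if_pos hη]; exact (hp η hη).1
    · rw [if_neg hη]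
      have hpos : 0 < μ.ord := by
        rcases eq_or_lt_of_le (zero_le : (0 : Ordinal) ≤ μ.ord) with h0' | h0'
        · rw [ho, ← h0', add_zero] at hηo; exact absurd hηo (not_lt_zero' : ¬ η < 0)
        · exact h0'
      exact (hp _ (Ordinal.sub_lt_of_lt_add hηo hpos)).2.1
  have hocard : o.card < lam := by
    rw [ho, Ordinal.card_add, Cardinal.card_ord]
    exact Cardinal.add_lt_of_lt hlam.aleph0_le hμ hμ
  have hG := clubInter lam hlam h0 o hocard f hfc
  obtain ⟨α, ⟨hαS, hαC⟩, hαG⟩ := hguess _ hG _ hG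
  rw [hT] at hαS
  obtain ⟨η, hη, hαT⟩ := Set.mem_iUnion₂.1 hαS
  have hG1 : (Set.Iio lam.ord ∩ ⋂ x ∈ Set.Iio o, f x) ⊆ (p η).1 := by
    intro x hx
    have := Set.mem_iInter₂.1 hx.2 η (show η < o from lt_of_lt_of_le hη (le_self_add))
    simp only [hf] at this
    rwa [if_pos (show η < μ.ord from hη)] at this
  have hG2 : (Set.Iio lam.ord ∩ ⋂ x ∈ Set.Iio o, f x) ⊆ (p η).2 := by
    intro x hx
    have := Set.mem_iInter₂.1 hx.2 (μ.ord + η) ((add_lt_add_iff_left μ.ord).2 hη)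
    simp only [hf] at this
    rwa [if_neg (not_lt.2 (le_self_add)), Ordinal.add_sub_cancel] at this
  have : α ∈ {α ∈ T η | C α ⊆ (p η).1} ∩ (p η).2 :=
    ⟨⟨hαT, fun x hx => hG1 (hαC hx)⟩, hG2 hαG⟩
  rw [(hp η hη).2.2] at this
  exact this
end

section
/- Assume the diamond principle ♦ on ω₁ (there is a sequence ⟨A_α : α < ω₁⟩ with A_α ⊆ α such that for every A ⊆ ω₁ the set {α < ω₁ : A ∩ α = A_α} is stationary in ω₁). Then there exists a sequence ⟨(C_α, f_α) : α ∈ S⟩, where S = S^{ω₁}_ω, such that: for every α ∈ S, C_α is a cofinal subset of α of order type ω and f_α : S ∩ α → ℕ; and for every club D ⊆ ω₁ and every function f : S → ℕ, the set of α ∈ S such that C_α ⊆ D and f restricted to S ∩ α equals f_α is stationary in ω₁. -/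
open Cardinal

section DGall
open Cardinal Ordinal Set

noncomputable section DGaux

def o1 : Ordinal := (Cardinal.aleph 1).ord

lemma dg_omega1_isLimit : Order.IsSuccLimit o1 :=
  Cardinal.isSuccLimit_ord (aleph0_lt_aleph_one.le)

lemma dg_lt_omega1 {α : Ordinal} : α < o1 ↔ α.card ≤ ℵ₀ := by
  rw [o1, Cardinal.lt_ord, ← Cardinal.succ_aleph0, Order.lt_succ_iff]

lemma dg_mul_add_lt {β n : Ordinal} (hβ : β < o1) (hn : n < ω) :
    ω * β + n < o1 := by
  rw [dg_lt_omega1] at *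
  rw [Ordinal.card_add, Ordinal.card_mul, Ordinal.card_omega0]
  have h1 : n.card ≤ ℵ₀ := (Ordinal.card_le_card hn.le).trans (by simp [Ordinal.card_omega0])
  calc ℵ₀ * β.card + n.card ≤ ℵ₀ * ℵ₀ + ℵ₀ := by gcongr
    _ = ℵ₀ := by simp

lemma dg_sup_lt (g : ℕ → Ordinal) (h : ∀ n, g n < o1) : sSup (Set.range g) < o1 := by
  have := Ordinal.iSup_lt_omega_one (f := g) (by rw [← Cardinal.ord_aleph]; exact h)
  rw [← Cardinal.ord_aleph, iSup] at this
  exact this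

-- sSup facts
lemma dg_lt_sSup {T : Set Ordinal} {α x : Ordinal} (hT : T ⊆ Set.Iio α)
    (hsup : sSup T = α) (hx : x < α) : ∃ t ∈ T, x < t := by
  by_contra h
  push_neg at h
  have : sSup T ≤ x := csSup_le' (by intro t ht; exact h t ht)
  exact absurd (hsup ▸ this) (not_le.mpr hx)

lemma dg_countable_Iio {α : Ordinal} (h : α < o1) : (Set.Iio α).Countable := by
  rw [← Cardinal.le_aleph0_iff_set_countable, Ordinal.mk_Iio_ordinal]
  exact Cardinal.lift_le_aleph0.2 (dg_lt_omega1.1 h)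

open scoped Classical in
noncomputable def dg_pick (T : Set Ordinal) (α : Ordinal) (x : Ordinal) : Ordinal :=
  if h : ∃ t ∈ T, x < t then h.choose else 0

lemma dg_pick_spec {T : Set Ordinal} {α x : Ordinal} (hT : T ⊆ Set.Iio α)
    (hsup : sSup T = α) (hx : x < α) :
    dg_pick T α x ∈ T ∧ x < dg_pick T α x := by
  have h : ∃ t ∈ T, x < t := dg_lt_sSup hT hsup hx
  classical
  simp only [dg_pick, dif_pos h]
  exact ⟨h.choose_spec.1, h.choose_spec.2⟩

lemma dg_fund {α : Ordinal} (hlim : Order.IsSuccLimit α) (hα : α < o1) {T : Set Ordinal}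
    (hT : T ⊆ Set.Iio α) (hsup : sSup T = α) :
    ∃ g : ℕ → Ordinal, StrictMono g ∧ Set.range g ⊆ T ∧ ∀ x < α, ∃ n, x < g n := by
  obtain ⟨e, he⟩ := (dg_countable_Iio hα).exists_surjective ⟨0, Set.mem_Iio.mpr hlim.pos⟩
  let g : ℕ → Ordinal := fun n => Nat.rec (dg_pick T α (e 0)) (fun n gn => dg_pick T α (max gn ((e (n+1) : Ordinal)))) n
  have hg0 : g 0 ∈ T ∧ (e 0 : Ordinal) < g 0 := dg_pick_spec hT hsup (Set.mem_Iio.mp (e 0).2)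
  have hgs : ∀ n, g (n+1) ∈ T ∧ max (g n) ((e (n+1) : Ordinal)) < g (n+1) := by
    intro n
    induction n with
    | zero => exact dg_pick_spec hT hsup (max_lt (hT hg0.1) (Set.mem_Iio.mp (e 1).2))
    | succ k ih => exact dg_pick_spec hT hsup (max_lt (hT ih.1) (Set.mem_Iio.mp (e (k+2)).2))
  have hmem : ∀ n, g n ∈ T := by
    intro n; cases n with
    | zero => exact hg0.1
    | succ k => exact (hgs k).1
  have hmono : StrictMono g := by
    apply strictMono_nat_of_lt_succ
    intro n
    exact lt_of_le_of_lt (le_max_left _ _) (hgs n).2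
  have hcof : ∀ x < α, ∃ n, x < g n := by
    intro x hx
    obtain ⟨n, hn⟩ := he ⟨x, Set.mem_Iio.mpr hx⟩
    refine ⟨n, ?_⟩
    have hex : (e n : Ordinal) = x := by rw [hn]
    rw [← hex]
    cases n with
    | zero => exact hg0.2
    | succ k => exact lt_of_le_of_lt (le_max_right _ _) (hgs k).2
  exact ⟨g, hmono, Set.range_subset_iff.2 hmem, hcof⟩

universe u in
lemma dg_otp {g : ℕ → Ordinal.{u}} (hg : StrictMono g) :
    setOtp (Set.range g) = Ordinal.omega0 := by
  have h := Ordinal.lift_type_eq.{u+1, 0, u+1} (r := ((· < ·) : (Set.range g) → (Set.range g) → Prop))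
    (s := ((· < ·) : ℕ → ℕ → Prop)) |>.2 ⟨(hg.orderIso g).symm.toRelIsoLT⟩
  rw [Ordinal.type_nat_lt, Ordinal.lift_omega0, Ordinal.lift_id] at h
  exact h

lemma dg_sSup_range {α : Ordinal} {g : ℕ → Ordinal} (hsub : Set.range g ⊆ Set.Iio α)
    (hcof : ∀ x < α, ∃ n, x < g n) : sSup (Set.range g) = α := by
  apply le_antisymm
  · exact csSup_le' (fun t ht => (hsub ht).le)
  · by_contra h
    push_neg at h
    obtain ⟨n, hn⟩ := hcof _ h
    exact absurd (le_csSup (Ordinal.bddAbove_range g) (Set.mem_range_self n)) (not_le.mpr hn)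

-- cofinality facts
lemma dg_cof_eq {α : Ordinal} (hα : α < o1) (hlim : Order.IsSuccLimit α) : α.cof = ℵ₀ :=
  le_antisymm ((Ordinal.cof_le_card α).trans (dg_lt_omega1.1 hα)) (Ordinal.aleph0_le_cof.2 hlim)

lemma dg_isLimit_of_cof {α : Ordinal} (h : α.cof = ℵ₀) : Order.IsSuccLimit α :=
  Ordinal.aleph0_le_cof.1 h.ge

lemma dg_sup_eq_of_cofinal {T : Set Ordinal} {s : Ordinal} (hT : T ⊆ Set.Iio s)
    (h : ∀ x < s, ∃ t ∈ T, x < t) : sSup T = s := by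
  apply le_antisymm
  · exact csSup_le' (fun t ht => (hT ht).le)
  · by_contra hc
    push_neg at hc
    obtain ⟨t, ht, hxt⟩ := h _ hc
    have hb : BddAbove T := ⟨s, fun y hy => (hT hy).le⟩
    exact absurd (le_csSup hb ht) (not_le.mpr hxt)

lemma dg_limit_of_sup {T : Set Ordinal} {α : Ordinal} (hT : T ⊆ Set.Iio α)
    (h : sSup T = α) (h0 : α ≠ 0) : Order.IsSuccLimit α := by
  rcases Ordinal.zero_or_succ_or_isSuccLimit α with h1 | ⟨b, hb⟩ | h1
  · exact absurd h1 h0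
  · exfalso
    replace hb := hb.symm
    have : sSup T ≤ b := csSup_le' (fun t ht => Order.le_of_lt_succ (hb ▸ hT ht))
    rw [h, hb] at this
    exact absurd this (Order.lt_succ b).not_ge
  · exact h1

open scoped Classical in
noncomputable def dg_cpick (D : Set Ordinal) (x : Ordinal) : Ordinal :=
  if h : ∃ b ∈ D, x < b then h.choose else 0

lemma dg_cpick_spec {D : Set Ordinal} (hD : IsClubIn D o1) {x : Ordinal} (hx : x < o1) :
    dg_cpick D x ∈ D ∧ x < dg_cpick D x := by
  classical
  have h : ∃ b ∈ D, x < b := hD.2.1 x hx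
  simp only [dg_cpick, dif_pos h]
  exact ⟨h.choose_spec.1, h.choose_spec.2⟩

lemma dg_lt_sSup_range {g : ℕ → Ordinal} {x : Ordinal} (h : x < sSup (Set.range g)) :
    ∃ n, x < g n := by
  have := (lt_csSup_iff (Ordinal.bddAbove_range g) (Set.range_nonempty g)).1 h
  obtain ⟨b, ⟨n, rfl⟩, hb⟩ := this
  exact ⟨n, hb⟩

lemma dg_le_sSup_range (g : ℕ → Ordinal) (n : ℕ) : g n ≤ sSup (Set.range g) :=
  le_csSup (Ordinal.bddAbove_range g) (Set.mem_range_self n)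

lemma dg_club_inter {D E : Set Ordinal} (hD : IsClubIn D o1) (hE : IsClubIn E o1) :
    IsClubIn (D ∩ E) o1 := by
  refine ⟨fun x hx => hD.1 hx.1, ?_, ?_⟩
  · intro a ha
    set g : ℕ → Ordinal := fun n => Nat.rec (dg_cpick D a) (fun _ gn => dg_cpick E (dg_cpick D gn)) n with hg
    have hlt : ∀ n, g n < o1 := by
      intro n
      induction n with
      | zero => exact hD.1 (dg_cpick_spec hD ha).1
      | succ k ih => exact hE.1 (dg_cpick_spec hE (hD.1 (dg_cpick_spec hD ih).1)).1
    have hstep : ∀ n, g n < dg_cpick D (g n) ∧ dg_cpick D (g n) ∈ D ∧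
        dg_cpick D (g n) < g (n+1) ∧ g (n+1) ∈ E := by
      intro n
      have h1 := dg_cpick_spec hD (hlt n)
      have h2 := dg_cpick_spec hE (hD.1 h1.1)
      exact ⟨h1.2, h1.1, h2.2, h2.1⟩
    have hmono : StrictMono g := by
      apply strictMono_nat_of_lt_succ
      intro n
      exact (hstep n).1.trans (hstep n).2.2.1
    set s := sSup (Set.range g) with hs
    have hslt : s < o1 := dg_sup_lt g hlt
    have hgs : ∀ n, g n < s := fun n => lt_of_lt_of_le (hmono (Nat.lt_succ_self n)) (dg_le_sSup_range g (n+1))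
    have has : a < s := lt_trans (dg_cpick_spec hD ha).2 (hgs 0)
    have hs0 : s ≠ 0 := fun h => by rw [h] at has; exact absurd has (fun h' => not_lt_zero h')
    refine ⟨s, ⟨?_, ?_⟩, has⟩
    · apply hD.2.2 s hslt hs0
      apply dg_sup_eq_of_cofinal (fun x hx => hx.2)
      intro x hx
      obtain ⟨n, hn⟩ := dg_lt_sSup_range hx
      exact ⟨dg_cpick D (g n), ⟨(hstep n).2.1, Set.mem_Iio.mpr ((hstep n).2.2.1.trans (hgs (n+1)))⟩,
        hn.trans (hstep n).1⟩
    · apply hE.2.2 s hslt hs0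
      apply dg_sup_eq_of_cofinal (fun x hx => hx.2)
      intro x hx
      obtain ⟨n, hn⟩ := dg_lt_sSup_range hx
      exact ⟨g (n+1), ⟨(hstep n).2.2.2, Set.mem_Iio.mpr (hgs (n+1))⟩,
        hn.trans ((hstep n).1.trans (hstep n).2.2.1)⟩
  · intro a ha h0 hsup
    have hne : (D ∩ E ∩ Set.Iio a).Nonempty := by
      by_contra hc
      rw [Set.not_nonempty_iff_eq_empty] at hc
      rw [hc] at hsup
      simp at hsup
      exact h0 hsup.symm
    have hbdd : BddAbove (D ∩ Set.Iio a) := ⟨a, fun y hy => hy.2.le⟩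
    have hbdd' : BddAbove (E ∩ Set.Iio a) := ⟨a, fun y hy => hy.2.le⟩
    have hDsup : sSup (D ∩ Set.Iio a) = a := by
      apply le_antisymm (csSup_le' (fun t ht => ht.2.le))
      calc a = sSup (D ∩ E ∩ Set.Iio a) := hsup.symm
        _ ≤ sSup (D ∩ Set.Iio a) := csSup_le_csSup hbdd hne (fun x hx => ⟨hx.1.1, hx.2⟩)
    have hEsup : sSup (E ∩ Set.Iio a) = a := by
      apply le_antisymm (csSup_le' (fun t ht => ht.2.le))
      calc a = sSup (D ∩ E ∩ Set.Iio a) := hsup.symm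
        _ ≤ sSup (E ∩ Set.Iio a) := csSup_le_csSup hbdd' hne (fun x hx => ⟨hx.1.2, hx.2⟩)
    exact ⟨hD.2.2 a ha h0 hDsup, hE.2.2 a ha h0 hEsup⟩

def dgLim (D : Set Ordinal) : Set Ordinal :=
  {x | x < o1 ∧ x ≠ 0 ∧ sSup (D ∩ Set.Iio x) = x}

lemma dg_club_lim {D : Set Ordinal} (hD : IsClubIn D o1) : IsClubIn (dgLim D) o1 := by
  refine ⟨fun x hx => hx.1, ?_, ?_⟩
  · intro a ha
    set g : ℕ → Ordinal := fun n => Nat.rec (dg_cpick D a) (fun _ gn => dg_cpick D gn) n with hg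
    have hlt : ∀ n, g n < o1 ∧ g n ∈ D := by
      intro n
      induction n with
      | zero =>
        have := dg_cpick_spec hD ha
        exact ⟨hD.1 this.1, this.1⟩
      | succ k ih =>
        have := dg_cpick_spec hD ih.1
        exact ⟨hD.1 this.1, this.1⟩
    have hmono : StrictMono g := by
      apply strictMono_nat_of_lt_succ
      intro n
      exact (dg_cpick_spec hD (hlt n).1).2
    set s := sSup (Set.range g) with hs
    have hslt : s < o1 := dg_sup_lt g (fun n => (hlt n).1)
    have hgs : ∀ n, g n < s := fun n => lt_of_lt_of_le (hmono (Nat.lt_succ_self n)) (dg_le_sSup_range g (n+1))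
    have has : a < s := lt_trans (dg_cpick_spec hD ha).2 (hgs 0)
    have hs0 : s ≠ 0 := fun h => by rw [h] at has; exact absurd has (fun h' => not_lt_zero h')
    refine ⟨s, ⟨hslt, hs0, ?_⟩, has⟩
    apply dg_sup_eq_of_cofinal (fun x hx => hx.2)
    intro x hx
    obtain ⟨n, hn⟩ := dg_lt_sSup_range hx
    exact ⟨g n, ⟨(hlt n).2, Set.mem_Iio.mpr (hgs n)⟩, hn⟩
  · intro a ha h0 hsup
    refine ⟨ha, h0, ?_⟩
    apply dg_sup_eq_of_cofinal (fun x hx => hx.2)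
    intro x hx
    have : ∃ y ∈ dgLim D ∩ Set.Iio a, x < y := by
      by_contra hc
      push_neg at hc
      have : sSup (dgLim D ∩ Set.Iio a) ≤ x := csSup_le' (fun t ht => hc t ht)
      rw [hsup] at this
      exact absurd this (not_le.mpr hx)
    obtain ⟨y, ⟨hy1, hy2⟩, hxy⟩ := this
    obtain ⟨t, ht, hxt⟩ := dg_lt_sSup (fun z hz => hz.2) hy1.2.2 hxy
    exact ⟨t, ⟨ht.1, Set.mem_Iio.mpr (ht.2.trans hy2)⟩, hxt⟩

def dgM : Set Ordinal :=
  {x | x < o1 ∧ ∀ β < x, ω * (β + 1) < x}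

lemma dg_club_M : IsClubIn dgM o1 := by
  refine ⟨fun x hx => hx.1, ?_, ?_⟩
  · intro a ha
    set g : ℕ → Ordinal := fun n => Nat.rec (a + 1) (fun _ gn => ω * gn + 1) n with hg
    have hlt : ∀ n, g n < o1 := by
      intro n
      induction n with
      | zero => exact dg_omega1_isLimit.succ_lt ha
      | succ k ih => exact dg_mul_add_lt ih Ordinal.one_lt_omega0
    have hmono : StrictMono g := by
      apply strictMono_nat_of_lt_succ
      intro n
      calc g n = 1 * g n := (one_mul _).symm
        _ ≤ ω * g n := mul_le_mul_left Ordinal.one_lt_omega0.le _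
        _ < ω * g n + 1 := lt_of_lt_of_le (lt_add_one _) le_rfl
    set s := sSup (Set.range g) with hs
    have hslt : s < o1 := dg_sup_lt g hlt
    have hgs : ∀ n, g n < s := fun n => lt_of_lt_of_le (hmono (Nat.lt_succ_self n)) (dg_le_sSup_range g (n+1))
    have has : a < s := lt_trans (lt_add_one a) (hgs 0)
    refine ⟨s, ⟨hslt, ?_⟩, has⟩
    intro β hβ
    obtain ⟨n, hn⟩ := dg_lt_sSup_range hβ
    calc ω * (β + 1) ≤ ω * g n := mul_le_mul_right (Order.add_one_le_of_lt hn) _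
      _ < ω * g n + 1 := lt_of_lt_of_le (lt_add_one _) le_rfl
      _ ≤ s := by
        have := dg_le_sSup_range g (n+1)
        exact this
  · intro a ha h0 hsup
    refine ⟨ha, ?_⟩
    intro β hβ
    have : ∃ y ∈ dgM ∩ Set.Iio a, β < y := by
      by_contra hc
      push_neg at hc
      have : sSup (dgM ∩ Set.Iio a) ≤ β := csSup_le' (fun t ht => hc t ht)
      rw [hsup] at this
      exact absurd this (not_le.mpr hβ)
    obtain ⟨y, ⟨hy1, hy2⟩, hβy⟩ := this
    exact (hy1.2 β hβy).trans hy2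

lemma dg_code_inj {β γ r r' : Ordinal} (hr : r < ω) (hr' : r' < ω)
    (h : ω * β + r = ω * γ + r') : β = γ ∧ r = r' := by
  have hd : β = γ := by
    have h1 : (ω * β + r) / ω = β := by
      rw [Ordinal.mul_add_div _ Ordinal.omega0_ne_zero, Ordinal.div_eq_zero_of_lt hr, add_zero]
    have h2 : (ω * γ + r') / ω = γ := by
      rw [Ordinal.mul_add_div _ Ordinal.omega0_ne_zero, Ordinal.div_eq_zero_of_lt hr', add_zero]
    rw [← h1, h, h2]
  refine ⟨hd, ?_⟩
  have h1 : (ω * β + r) % ω = r := by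
    rw [Ordinal.mul_add_mod_self, Ordinal.mod_eq_of_lt hr]
  have h2 : (ω * γ + r') % ω = r' := by
    rw [Ordinal.mul_add_mod_self, Ordinal.mod_eq_of_lt hr']
  rw [← h1, h, h2]

lemma dg_mul_lt {β α : Ordinal} (hβ : β < α) (hM : α ∈ dgM) : ω * β < α := by
  calc ω * β < ω * β + ω := lt_add_of_pos_right _ Ordinal.omega0_pos
    _ = ω * (β + 1) := by rw [mul_add, mul_one]
    _ < α := hM.2 β hβ

lemma dg_mul_add_nat_lt {β α : Ordinal} (n : ℕ) (hβ : β < α) (hM : α ∈ dgM) :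
    ω * β + (n : Ordinal) + 1 < α := by
  calc ω * β + (n : Ordinal) + 1 = ω * β + ((n : Ordinal) + 1) := by rw [add_assoc]
    _ < ω * β + ω := by
        apply (add_lt_add_iff_left _).2
        exact_mod_cast Ordinal.nat_lt_omega0 (n + 1)
    _ = ω * (β + 1) := by rw [mul_add, mul_one]
    _ < α := hM.2 β hβ

section main

variable (A : Ordinal → Set Ordinal)

def dgT (α : Ordinal) : Set Ordinal := {β | β < α ∧ ω * β ∈ A α}

lemma dgT_sub (α : Ordinal) : dgT A α ⊆ Set.Iio α := fun _ h => h.1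

open scoped Classical in
noncomputable def dgTT (α : Ordinal) : Set Ordinal :=
  if sSup (dgT A α) = α then dgT A α else Set.Iio α

lemma dgTT_sub (α : Ordinal) : dgTT A α ⊆ Set.Iio α := by
  classical
  rw [dgTT]
  split
  · exact dgT_sub A α
  · exact fun _ h => h

lemma dgTT_sup {α : Ordinal} (hlim : Order.IsSuccLimit α) : sSup (dgTT A α) = α := by
  classical
  rw [dgTT]
  split
  · assumption
  · exact hlim.sSup_Iio

open scoped Classical in
noncomputable def dgSeq (α : Ordinal) : ℕ → Ordinal :=
  if h : α < o1 ∧ α.cof = ℵ₀ then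
    Classical.choose (dg_fund (dg_isLimit_of_cof h.2) h.1 (dgTT_sub A α)
      (dgTT_sup A (dg_isLimit_of_cof h.2)))
  else fun _ => 0

lemma dgSeq_spec {α : Ordinal} (h1 : α < o1) (h2 : α.cof = ℵ₀) :
    StrictMono (dgSeq A α) ∧ Set.range (dgSeq A α) ⊆ dgTT A α ∧
      ∀ x < α, ∃ n, x < dgSeq A α n := by
  classical
  have h : α < o1 ∧ α.cof = ℵ₀ := ⟨h1, h2⟩
  rw [dgSeq]
  simp only [dif_pos h]
  exact Classical.choose_spec (dg_fund (dg_isLimit_of_cof h.2) h.1 (dgTT_sub A α)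
      (dgTT_sup A (dg_isLimit_of_cof h.2)))

open scoped Classical in
noncomputable def dgC (α : Ordinal) : Set Ordinal :=
  if α < o1 ∧ α.cof = ℵ₀ then Set.range (dgSeq A α) else ∅

lemma dgC_eq {α : Ordinal} (h1 : α < o1) (h2 : α.cof = ℵ₀) :
    dgC A α = Set.range (dgSeq A α) := by
  classical
  rw [dgC, if_pos ⟨h1, h2⟩]

open scoped Classical in
noncomputable def dgF (α β : Ordinal) : ℕ :=
  if h : ∃ n : ℕ, ω * β + (n : Ordinal) + 1 ∈ A α then h.choose else 0

lemma dg_mul_lt_o1 {β : Ordinal} (hβ : β < o1) : ω * β < o1 := by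
  have := dg_mul_add_lt hβ Ordinal.omega0_pos
  simpa using this

lemma dg_code2_lt {β : Ordinal} (hβ : β < o1) (n : ℕ) : ω * β + (n : Ordinal) + 1 < o1 := by
  rw [add_assoc]
  apply dg_mul_add_lt hβ
  exact_mod_cast Ordinal.nat_lt_omega0 (n + 1)

end main

universe u in
def dgDiamond : Prop :=
  ∃ A : Ordinal.{u} → Set Ordinal.{u},
      (∀ α < (Cardinal.aleph 1).ord, A α ⊆ Set.Iio α) ∧
      ∀ B : Set Ordinal.{u}, B ⊆ Set.Iio (Cardinal.aleph 1).ord →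
        IsStationaryIn {α | α < (Cardinal.aleph 1).ord ∧ B ∩ Set.Iio α = A α}
          (Cardinal.aleph 1).ord

universe u in
theorem diamond_gives_guessing_pairs' (hdiamond : dgDiamond.{u}) :
    ∃ (C : Ordinal.{u} → Set Ordinal.{u}) (F : Ordinal.{u} → Ordinal.{u} → ℕ),
      (∀ α : Ordinal, α < (Cardinal.aleph 1).ord → α.cof = Cardinal.aleph0 →
        C α ⊆ Set.Iio α ∧ sSup (C α) = α ∧ setOtp (C α) = Ordinal.omega0) ∧
      ∀ D : Set Ordinal, IsClubIn D (Cardinal.aleph 1).ord →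
        ∀ f : Ordinal → ℕ,
          IsStationaryIn
            {α | α < (Cardinal.aleph 1).ord ∧ α.cof = Cardinal.aleph0 ∧ C α ⊆ D ∧
              ∀ β < α, β.cof = Cardinal.aleph0 → F α β = f β}
            (Cardinal.aleph 1).ord := by
  classical
  obtain ⟨A, hA1, hA2⟩ := hdiamond
  refine ⟨dgC A, dgF A, ?_, ?_⟩
  · intro α h1 h2
    have hspec := dgSeq_spec A h1 h2
    have hC : dgC A α = Set.range (dgSeq A α) := dgC_eq A h1 h2
    have hsub : Set.range (dgSeq A α) ⊆ Set.Iio α := hspec.2.1.trans (dgTT_sub A α)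
    refine ⟨?_, ?_, ?_⟩
    · rw [hC]; exact hsub
    · rw [hC]; exact dg_sSup_range hsub hspec.2.2
    · rw [hC]; exact dg_otp hspec.1
  · intro D hD f Echal hEchal
    set B : Set Ordinal :=
      ((fun β => ω * β) '' D) ∪ ((fun β => ω * β + (f β : Ordinal) + 1) '' Set.Iio o1) with hBdef
    have hBsub : B ⊆ Set.Iio o1 := by
      rintro x (⟨γ, hγD, rfl⟩ | ⟨γ, hγ, rfl⟩)
      · exact dg_mul_lt_o1 (hD.1 hγD)
      · exact dg_code2_lt hγ (f γ)
    have hK : IsClubIn (Echal ∩ (dgLim D ∩ dgM)) o1 :=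
      dg_club_inter hEchal (dg_club_inter (dg_club_lim hD) dg_club_M)
    obtain ⟨α, ⟨hα1, hαA⟩, hαE, hαLim, hαM⟩ := hA2 B hBsub _ hK
    have hlim : Order.IsSuccLimit α := dg_limit_of_sup (fun x hx => hx.2) hαLim.2.2 hαLim.2.1
    have hcof : α.cof = ℵ₀ := dg_cof_eq hα1 hlim
    -- decode T
    have hT : dgT A α = D ∩ Set.Iio α := by
      ext β
      constructor
      · rintro ⟨hβα, hmem⟩
        rw [← hαA] at hmem
        rcases hmem.1 with ⟨γ, hγD, hγeq⟩ | ⟨γ, hγ, hγeq⟩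
        · replace hγeq : ω * γ = ω * β := hγeq
          have h0 : ω * γ + 0 = ω * β + 0 := by rw [add_zero, add_zero, hγeq]
          have := (dg_code_inj Ordinal.omega0_pos Ordinal.omega0_pos h0).1
          exact ⟨this ▸ hγD, hβα⟩
        · exfalso
          replace hγeq : ω * γ + (f γ : Ordinal) + 1 = ω * β := hγeq
          have h0 : ω * γ + ((f γ : Ordinal) + 1) = ω * β + 0 := by
            rw [add_zero, ← add_assoc, hγeq]
          have hr : (f γ : Ordinal) + 1 < ω := by
            exact_mod_cast Ordinal.nat_lt_omega0 (f γ + 1)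
          have h1 := (dg_code_inj hr Ordinal.omega0_pos h0).2
          have h2 : ((f γ + 1 : ℕ) : Ordinal) = ((0 : ℕ) : Ordinal) := by push_cast; exact h1
          exact Nat.succ_ne_zero _ (Nat.cast_injective h2)
      · rintro ⟨hβD, hβα⟩
        refine ⟨hβα, ?_⟩
        rw [← hαA]
        exact ⟨Or.inl ⟨β, hβD, rfl⟩, dg_mul_lt hβα hαM⟩
    have hTsup : sSup (dgT A α) = α := by rw [hT]; exact hαLim.2.2
    have hTT : dgTT A α = D ∩ Set.Iio α := by rw [dgTT, if_pos hTsup, hT]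
    have hC : dgC A α = Set.range (dgSeq A α) := dgC_eq A hα1 hcof
    have hspec := dgSeq_spec A hα1 hcof
    have hCD : dgC A α ⊆ D := by
      rw [hC]
      intro x hx
      have := hspec.2.1 hx
      rw [hTT] at this
      exact this.1
    have hF : ∀ β < α, dgF A α β = f β := by
      intro β hβ
      have hmem : ω * β + (f β : Ordinal) + 1 ∈ A α := by
        rw [← hαA]
        exact ⟨Or.inr ⟨β, Set.mem_Iio.mpr (hβ.trans hα1), rfl⟩, dg_mul_add_nat_lt (f β) hβ hαM⟩
      have hex : ∃ n : ℕ, ω * β + (n : Ordinal) + 1 ∈ A α := ⟨f β, hmem⟩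
      rw [dgF, dif_pos hex]
      have hch : ω * β + (hex.choose : Ordinal) + 1 ∈ B ∩ Set.Iio α := by
        rw [hαA]; exact hex.choose_spec
      rcases hch.1 with ⟨γ, hγD, hγeq⟩ | ⟨γ, hγ, hγeq⟩
      · exfalso
        replace hγeq : ω * γ = ω * β + (hex.choose : Ordinal) + 1 := hγeq
        have h0 : ω * γ + 0 = ω * β + ((hex.choose : Ordinal) + 1) := by
          rw [add_zero, hγeq, add_assoc]
        have hr : (hex.choose : Ordinal) + 1 < ω := by
          exact_mod_cast Ordinal.nat_lt_omega0 (hex.choose + 1)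
        have h1 := (dg_code_inj Ordinal.omega0_pos hr h0).2
        have h2 : ((0 : ℕ) : Ordinal) = ((hex.choose + 1 : ℕ) : Ordinal) := by push_cast; exact h1
        exact Nat.succ_ne_zero _ (Nat.cast_injective h2).symm
      · replace hγeq : ω * γ + (f γ : Ordinal) + 1 = ω * β + (hex.choose : Ordinal) + 1 := hγeq
        have h0 : ω * γ + ((f γ : Ordinal) + 1) = ω * β + ((hex.choose : Ordinal) + 1) := by
          rw [← add_assoc, ← add_assoc, hγeq]
        have hr : (f γ : Ordinal) + 1 < ω := by
          exact_mod_cast Ordinal.nat_lt_omega0 (f γ + 1)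
        have hr' : (hex.choose : Ordinal) + 1 < ω := by
          exact_mod_cast Ordinal.nat_lt_omega0 (hex.choose + 1)
        obtain ⟨hγβ, heq⟩ := dg_code_inj hr hr' h0
        subst hγβ
        have : ((f γ + 1 : ℕ) : Ordinal) = ((hex.choose + 1 : ℕ) : Ordinal) := by
          push_cast
          exact heq
        have := Nat.cast_injective this
        omega
    exact ⟨α, ⟨hα1, hcof, hCD, fun β hβ _ => hF β hβ⟩, hαE⟩

section transfer

universe u v

lemma dgO1 : Ordinal.lift.{v} (Cardinal.aleph.{u} 1).ord
    = Ordinal.lift.{u} (Cardinal.aleph.{v} 1).ord := by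
  rw [Cardinal.lift_ord, Cardinal.lift_ord, Cardinal.lift_aleph, Cardinal.lift_aleph,
    Ordinal.lift_one, Ordinal.lift_one]

open scoped Classical in
noncomputable def dgDown : Ordinal.{max u v} → Ordinal.{v} := fun x =>
  if h : ∃ y : Ordinal.{v}, Ordinal.lift.{u} y = x then h.choose else 0

noncomputable def dgPhi (α : Ordinal.{u}) : Ordinal.{v} :=
  dgDown.{u, v} (Ordinal.lift.{v} α)

lemma dgPhi_spec {α : Ordinal.{u}} (h : α < (Cardinal.aleph 1).ord) :
    Ordinal.lift.{u} (dgPhi.{u, v} α) = Ordinal.lift.{v} α := by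
  classical
  have hb : Ordinal.lift.{v} α ≤ Ordinal.lift.{u} (Cardinal.aleph.{v} 1).ord := by
    rw [← dgO1]
    exact (Ordinal.lift_lt.2 h).le
  have hex : ∃ y : Ordinal.{v}, Ordinal.lift.{u} y = Ordinal.lift.{v} α :=
    Ordinal.mem_range_lift_of_le hb
  rw [dgPhi, dgDown]
  simp only [dif_pos hex]
  exact hex.choose_spec

lemma dgPhi_lt_omega1 {α : Ordinal.{u}} (h : α < (Cardinal.aleph 1).ord) :
    dgPhi.{u, v} α < (Cardinal.aleph 1).ord := by
  have := dgPhi_spec.{u, v} h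
  rw [← Ordinal.lift_lt.{u,v}, this, ← dgO1]
  exact Ordinal.lift_lt.2 h

lemma dgPhi_lt_iff {α β : Ordinal.{u}} (hα : α < (Cardinal.aleph 1).ord)
    (hβ : β < (Cardinal.aleph 1).ord) :
    dgPhi.{u, v} α < dgPhi.{u, v} β ↔ α < β := by
  rw [← Ordinal.lift_lt.{u,v}, dgPhi_spec hα, dgPhi_spec hβ, Ordinal.lift_lt]

lemma dgPhi_psi {α : Ordinal.{v}} (h : α < (Cardinal.aleph 1).ord) :
    dgPhi.{u, v} (dgPhi.{v, u} α) = α := by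
  have h2 : dgPhi.{v, u} α < (Cardinal.aleph 1).ord := dgPhi_lt_omega1 h
  have e1 := dgPhi_spec.{u, v} h2
  have e2 := dgPhi_spec.{v, u} h
  rw [← Ordinal.lift_inj.{u,v}, e1, e2]

lemma dgPhi_ne_zero {α : Ordinal.{u}} (h : α < (Cardinal.aleph 1).ord) (h0 : α ≠ 0) :
    dgPhi.{u, v} α ≠ 0 := by
  intro hc
  apply h0
  have := dgPhi_spec.{u, v} h
  rw [hc, Ordinal.lift_zero] at this
  have h2 : Ordinal.lift.{v} α = Ordinal.lift.{v} (0 : Ordinal.{u}) := by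
    rw [Ordinal.lift_zero]; exact this.symm
  exact Ordinal.lift_inj.1 h2

lemma dg_diamond_transfer (hd : dgDiamond.{u}) : dgDiamond.{v} := by
  obtain ⟨A, hA1, hA2⟩ := hd
  refine ⟨fun γ => dgPhi.{u, v} '' (A (dgPhi.{v, u} γ)), ?_, ?_⟩
  · intro γ hγ x hx
    obtain ⟨y, hy, rfl⟩ := hx
    have hψγ : dgPhi.{v, u} γ < (Cardinal.aleph 1).ord := dgPhi_lt_omega1 hγ
    have hyy : y < dgPhi.{v, u} γ := hA1 _ hψγ hy
    have hy1 : y < (Cardinal.aleph 1).ord := hyy.trans hψγ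
    have h2 := (dgPhi_lt_iff.{u, v} hy1 hψγ).2 hyy
    rwa [dgPhi_psi hγ] at h2
  · intro B' hB' D' hD'
    set D : Set Ordinal.{u} := dgPhi.{v, u} '' D' with hDdef
    have hDsub : D ⊆ Set.Iio (Cardinal.aleph 1).ord := by
      rintro x ⟨y, hy, rfl⟩
      exact dgPhi_lt_omega1 (hD'.1 hy)
    have hDclub : IsClubIn D (Cardinal.aleph 1).ord := by
      refine ⟨hDsub, ?_, ?_⟩
      · intro a ha
        obtain ⟨b, hb, hab⟩ := hD'.2.1 (dgPhi.{u, v} a) (dgPhi_lt_omega1 ha)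
        refine ⟨dgPhi.{v, u} b, ⟨b, hb, rfl⟩, ?_⟩
        have hbo : b < (Cardinal.aleph 1).ord := hD'.1 hb
        have h2 := (dgPhi_lt_iff.{v, u} (dgPhi_lt_omega1 ha) hbo).2 hab
        rwa [dgPhi_psi ha] at h2
      · intro a ha h0 hsup
        set a' := dgPhi.{u, v} a with ha'def
        have ha' : a' < (Cardinal.aleph 1).ord := dgPhi_lt_omega1 ha
        have key : sSup (D' ∩ Set.Iio a') = a' := by
          apply dg_sup_eq_of_cofinal (fun x hx => hx.2)
          intro y hy
          have hyo : y < (Cardinal.aleph 1).ord := hy.trans ha'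
          have hx : dgPhi.{v, u} y < a := by
            have h2 := (dgPhi_lt_iff.{v, u} hyo ha').2 hy
            rwa [dgPhi_psi ha] at h2
          obtain ⟨t, ht, hxt⟩ := dg_lt_sSup (fun z hz => (hz.2 : z ∈ Set.Iio a)) hsup hx
          obtain ⟨⟨w, hw, hwt⟩, ht2⟩ := ht
          have hto : t < (Cardinal.aleph 1).ord := ht2.trans ha
          refine ⟨dgPhi.{u, v} t, ⟨?_, ?_⟩, ?_⟩
          · rw [← hwt, dgPhi_psi (hD'.1 hw)]
            exact hw
          · exact (dgPhi_lt_iff hto ha).2 ht2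
          · have h2 := (dgPhi_lt_iff.{u, v} (dgPhi_lt_omega1 hyo) hto).2 hxt
            rwa [dgPhi_psi hyo] at h2
        have hmem := hD'.2.2 a' ha' (dgPhi_ne_zero ha h0) key
        exact ⟨a', hmem, dgPhi_psi ha⟩
    have hBsub : dgPhi.{v, u} '' B' ⊆ Set.Iio (Cardinal.aleph 1).ord := by
      rintro x ⟨y, hy, rfl⟩
      exact dgPhi_lt_omega1 (hB' hy)
    obtain ⟨α, ⟨hα1, hαA⟩, hαD⟩ := hA2 (dgPhi.{v, u} '' B') hBsub D hDclub
    have hφα : dgPhi.{u, v} α < (Cardinal.aleph 1).ord := dgPhi_lt_omega1 hα1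
    refine ⟨dgPhi.{u, v} α, ⟨hφα, ?_⟩, ?_⟩
    · show B' ∩ Set.Iio (dgPhi.{u, v} α)
        = dgPhi.{u, v} '' (A (dgPhi.{v, u} (dgPhi.{u, v} α)))
      rw [dgPhi_psi hα1, ← hαA]
      ext y
      constructor
      · rintro ⟨hyB', hy⟩
        have hyo : y < (Cardinal.aleph 1).ord := hB' hyB'
        refine ⟨dgPhi.{v, u} y, ⟨⟨y, hyB', rfl⟩, ?_⟩, dgPhi_psi hyo⟩
        have h2 := (dgPhi_lt_iff.{v, u} hyo hφα).2 hy
        rwa [dgPhi_psi hα1] at h2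
      · rintro ⟨x, ⟨hxB, hxα⟩, rfl⟩
        obtain ⟨w, hw, hwx⟩ := hxB
        have hxo : x < (Cardinal.aleph 1).ord := hxα.trans hα1
        constructor
        · rw [← hwx, dgPhi_psi (hB' hw)]
          exact hw
        · exact (dgPhi_lt_iff hxo hα1).2 hxα
    · obtain ⟨w, hw, hwα⟩ := hαD
      rw [← hwα, dgPhi_psi (hD'.1 hw)]
      exact hw

end transfer


end DGaux

/-- `♦` implies the existence of a sequence `⟨(C_α, f_α) : α ∈ S^{ω₁}_ω⟩` such that each
`C_α` is a cofinal subset of `α` of order type `ω` and `f_α : S ∩ α → ℕ`, and for every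
club `D ⊆ ω₁` and every `f : S → ℕ`, the set of `α ∈ S` with `C_α ⊆ D` and
`f ↾ (S ∩ α) = f_α` is stationary in `ω₁`. -/
theorem diamond_gives_guessing_pairs
    (hdiamond : ∃ A : Ordinal → Set Ordinal,
      (∀ α < (Cardinal.aleph 1).ord, A α ⊆ Set.Iio α) ∧
      ∀ B : Set Ordinal, B ⊆ Set.Iio (Cardinal.aleph 1).ord →
        IsStationaryIn {α | α < (Cardinal.aleph 1).ord ∧ B ∩ Set.Iio α = A α}
          (Cardinal.aleph 1).ord) :
    ∃ (C : Ordinal → Set Ordinal) (F : Ordinal → Ordinal → ℕ),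
      (∀ α : Ordinal, α < (Cardinal.aleph 1).ord → α.cof = Cardinal.aleph0 →
        C α ⊆ Set.Iio α ∧ sSup (C α) = α ∧ setOtp (C α) = Ordinal.omega0) ∧
      ∀ D : Set Ordinal, IsClubIn D (Cardinal.aleph 1).ord →
        ∀ f : Ordinal → ℕ,
          IsStationaryIn
            {α | α < (Cardinal.aleph 1).ord ∧ α.cof = Cardinal.aleph0 ∧ C α ⊆ D ∧
              ∀ β < α, β.cof = Cardinal.aleph0 → F α β = f β}
            (Cardinal.aleph 1).ord :=
  diamond_gives_guessing_pairs' (dg_diamond_transfer hdiamond)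

end DGall
end

section
/- Let k be a natural number and let G = (V, E) be a simple graph whose edge set decomposes as E = E' ∪ ⋃_{j<k} E_j, where each graph (V, E_j) contains no cycles and the graph (V, E') contains no odd cycles. Then χ(G) ≤ 2^{k+1}. -/
open SimpleGraph

private lemma length_eq_one_of_edge_aux {V : Type*} {H : SimpleGraph V} {v b : V}
    (p : H.Walk v b) (hp : p.IsPath) (he : s(v, b) ∈ p.edges) : p.length = 1 := by
  cases p with
  | nil => simp at he
  | @cons _ c _ h q =>
    rw [SimpleGraph.Walk.cons_isPath_iff] at hp
    rw [SimpleGraph.Walk.edges_cons, List.mem_cons] at he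
    rcases he with he | he
    · rw [Sym2.eq_iff] at he
      rcases he with ⟨-, hbc⟩ | ⟨hvc, -⟩
      · subst hbc
        have hq : q = SimpleGraph.Walk.nil := SimpleGraph.Walk.isPath_iff_eq_nil.mp hp.1
        rw [hq]
        simp
      · exact absurd hvc h.ne
    · exact absurd (q.fst_mem_support_of_mem_edges he) hp.2

private lemma decompose_closed_walk {V : Type*} [DecidableEq V] {H : SimpleGraph V} {u : V}
    (w : H.Walk u u) (hc : 2 ≤ w.support.tail.count u) :
    ∃ (c₁ c₂ : H.Walk u u),
      c₁.length + c₂.length = w.length ∧ 0 < c₁.length ∧ 0 < c₂.length := by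
  cases w with
  | nil => simp at hc
  | @cons _ c _ h t =>
    have htail : (SimpleGraph.Walk.cons h t).support.tail = t.support := by
      simp [SimpleGraph.Walk.support_cons]
    rw [htail] at hc
    have hmem : u ∈ t.support := by
      rw [← List.count_pos_iff]; omega
    refine ⟨SimpleGraph.Walk.cons h (t.takeUntil u hmem), t.dropUntil u hmem, ?_, by simp, ?_⟩
    · have hlen := congrArg SimpleGraph.Walk.length (t.take_spec hmem)
      rw [SimpleGraph.Walk.length_append] at hlen
      simp only [SimpleGraph.Walk.length_cons]
      omega
    · have hsplit := congrArg (fun l => List.count u l)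
        (congrArg SimpleGraph.Walk.support (t.take_spec hmem))
      simp only [SimpleGraph.Walk.support_append, List.count_append] at hsplit
      rw [SimpleGraph.Walk.count_support_takeUntil_eq_one] at hsplit
      by_contra hlen
      push_neg at hlen
      have hnil : t.dropUntil u hmem = SimpleGraph.Walk.nil :=
        SimpleGraph.Walk.nil_iff_eq_nil.mp (SimpleGraph.Walk.length_eq_zero_iff.mp (by omega))
      rw [hnil] at hsplit
      simp at hsplit
      omega

private lemma no_odd_closed_walk {V : Type*} {H : SimpleGraph V}
    (hodd : ∀ (v : V) (c : H.Walk v v), c.IsCycle → ¬Odd c.length) :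
    ∀ (n : ℕ) (v : V) (w : H.Walk v v), w.length = n → ¬Odd n := by
  classical
  intro n
  induction n using Nat.strong_induction_on with
  | _ n ih =>
  intro v w hlen hO
  have hw_rot : ∀ (u : V) (c : H.Walk u u), c.length = n →
      2 ≤ c.support.tail.count u → False := by
    intro u c hcl hcc
    obtain ⟨c₁, c₂, hsum, h1, h2⟩ := decompose_closed_walk c hcc
    rw [hcl] at hsum
    have hoddone : Odd c₁.length ∨ Odd c₂.length := by
      rw [Nat.odd_iff] at hO ⊢
      rw [Nat.odd_iff]
      omega
    rcases hoddone with ho | ho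
    · exact ih c₁.length (by omega) u c₁ rfl ho
    · exact ih c₂.length (by omega) u c₂ rfl ho
  cases w with
  | nil =>
    simp only [SimpleGraph.Walk.length_nil] at hlen
    rw [← hlen, Nat.odd_iff] at hO
    omega
  | @cons _ b _ h r =>
    rw [SimpleGraph.Walk.length_cons] at hlen
    by_cases hnd : r.support.Nodup
    · have hpath : r.IsPath := SimpleGraph.Walk.IsPath.mk' hnd
      by_cases he : s(v, b) ∈ r.edges
      · have h1 : r.reverse.length = 1 :=
          length_eq_one_of_edge_aux r.reverse hpath.reverse
            (by rw [SimpleGraph.Walk.edges_reverse, List.mem_reverse]; exact he)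
        rw [SimpleGraph.Walk.length_reverse] at h1
        rw [Nat.odd_iff] at hO
        omega
      · have hcyc : (SimpleGraph.Walk.cons h r).IsCycle :=
          (SimpleGraph.Walk.cons_isCycle_iff r h).mpr ⟨hpath, he⟩
        exact hodd v _ hcyc (by rw [SimpleGraph.Walk.length_cons, hlen]; exact hO)
    · have hex : ∃ u, 2 ≤ r.support.count u := by
        by_contra hcon
        push_neg at hcon
        exact hnd (List.nodup_iff_count_le_one.mpr fun u => by have := hcon u; omega)
      obtain ⟨u, hu2⟩ := hex
      have humem : u ∈ (SimpleGraph.Walk.cons h r).support := by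
        rw [SimpleGraph.Walk.support_cons]
        exact List.mem_cons_of_mem _ (by rw [← List.count_pos_iff]; omega)
      have hlen' : ((SimpleGraph.Walk.cons h r).rotate u humem).length = n := by
        have hspec := congrArg SimpleGraph.Walk.length ((SimpleGraph.Walk.cons h r).take_spec humem)
        rw [SimpleGraph.Walk.length_append] at hspec
        rw [SimpleGraph.Walk.rotate, SimpleGraph.Walk.length_append]
        rw [SimpleGraph.Walk.length_cons] at hspec
        omega
      have hcount : 2 ≤ ((SimpleGraph.Walk.cons h r).rotate u humem).support.tail.count u := by
        have hperm := ((SimpleGraph.Walk.cons h r).support_rotate u humem).perm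
        rw [hperm.count_eq]
        simpa [SimpleGraph.Walk.support_cons] using hu2
      exact hw_rot u _ hlen' hcount

private lemma two_coloring_of_no_odd_cycle {V : Type*} {H : SimpleGraph V}
    (hodd : ∀ (v : V) (c : H.Walk v v), c.IsCycle → ¬Odd c.length) :
    ∃ f : V → ZMod 2, ∀ a b, H.Adj a b → f a ≠ f b := by
  classical
  have key := no_odd_closed_walk hodd
  have hreach : ∀ v : V, H.Reachable ((H.connectedComponentMk v).out) v := by
    intro v
    exact SimpleGraph.ConnectedComponent.exact (Quot.out_eq _)
  let wk : ∀ v : V, H.Walk ((H.connectedComponentMk v).out) v := fun v => (hreach v).some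
  refine ⟨fun v => ((wk v).length : ZMod 2), ?_⟩
  intro a b hab heq
  have hrep : (H.connectedComponentMk b).out = (H.connectedComponentMk a).out :=
    congrArg _ (SimpleGraph.ConnectedComponent.connectedComponentMk_eq_of_adj hab.symm)
  let c : H.Walk ((H.connectedComponentMk a).out) ((H.connectedComponentMk a).out) :=
    (wk a).append (SimpleGraph.Walk.cons hab ((wk b).copy hrep rfl).reverse)
  have hclen : c.length = (wk a).length + ((wk b).length + 1) := by
    simp [c, SimpleGraph.Walk.length_append, SimpleGraph.Walk.length_cons,
      SimpleGraph.Walk.length_reverse]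
  have hmod : (wk a).length % 2 = (wk b).length % 2 := by
    rwa [ZMod.natCast_eq_natCast_iff'] at heq
  have : Odd c.length := by
    rw [hclen, Nat.odd_iff]
    omega
  exact key c.length _ c rfl this

/-- If the edge set of `G` decomposes as `E' ∪ ⋃_{j<k} E_j`, where each graph `(V, E_j)` is
acyclic and the graph `(V, E')` has no odd cycles, then `χ(G) ≤ 2^(k+1)`. -/
theorem colorable_of_decomposition {V : Type*} (k : ℕ) (G G' : SimpleGraph V)
    (Gj : Fin k → SimpleGraph V)
    (hacyclic : ∀ j : Fin k, (Gj j).IsAcyclic)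
    (hodd : ∀ (v : V) (c : G'.Walk v v), c.IsCycle → ¬Odd c.length)
    (hunion : ∀ a b : V, G.Adj a b ↔ G'.Adj a b ∨ ∃ j : Fin k, (Gj j).Adj a b) :
    G.Colorable (2 ^ (k + 1)) := by
  classical
  obtain ⟨f0, hf0⟩ := two_coloring_of_no_odd_cycle hodd
  have hGj : ∀ j, ∃ f : V → ZMod 2, ∀ a b, (Gj j).Adj a b → f a ≠ f b := fun j =>
    two_coloring_of_no_odd_cycle (fun v c hc _ => hacyclic j c hc)
  choose f hf using hGj
  have hcol : G.Colorable (Fintype.card (ZMod 2 × (Fin k → ZMod 2))) := by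
    apply SimpleGraph.Coloring.colorable
    refine SimpleGraph.Coloring.mk (fun v => (f0 v, fun j => f j v)) ?_
    intro a b hab hfe
    rcases (hunion a b).mp hab with h | ⟨j, h⟩
    · exact hf0 a b h (congrArg Prod.fst hfe)
    · exact hf j a b h (congrFun (congrArg Prod.snd hfe) j)
  have hcard : Fintype.card (ZMod 2 × (Fin k → ZMod 2)) = 2 ^ (k + 1) := by
    simp [Fintype.card_prod, pow_succ, mul_comm]
  rwa [hcard] at hcol
end
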